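/- (Theorem 8, correction part) Let n ≥ 5 be prime. Then the code C_{G_4} is a binary double-node-erasure-correcting code: for any two distinct indices i, j ∈ [n], any two labelings in C_{G_4} that agree on all ordered pairs (k,ℓ) with k ∉ {i,j} and ℓ ∉ {i,j} are equal. -/

import Mathlib

open Finset

/-- The code `C_{G_4}`: labelings `L : [n]×[n] → F_2` of the complete directed graph with
self-loops such that (a) for `h ∈ [n-2]` the sum of `L` over the neighborhood-edge set
`S↓_h = {down edge of {h,ℓ} : ℓ ∈ [n-1]}` is `0`; (b) for `m ∈ [n]` the sum over the
diagonal-edge set `D↓_m = {down edge of {k,ℓ} : k,ℓ ∈ [n]\{n-2}, ⟨k+ℓ⟩_n = m} ∪ {(n-1,n-2)}`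
is `0`; (c) for `h ∈ [n-2]` the sum over `S↑_h = {up edge of {h,ℓ} : ℓ ∈ [n]\{n-2}}` is `0`;
and (d) for `m ∈ [n]` the sum over
`D↑_m = {up edge of {k,ℓ} : k,ℓ ∈ [n-1], ⟨k+ℓ⟩_n = m} ∪ {(n-2,n-1)}` is `0`.
Each edge in a set is counted once; downward edges are the ordered pairs `(k,ℓ)` with
`ℓ ≤ k` and upward edges those with `k ≤ ℓ`. -/

def CG4 (n : ℕ) (hn : 5 ≤ n) : Set (Fin n → Fin n → ZMod 2) :=
  {L |
    (∀ h : Fin n, (h : ℕ) < n - 2 →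
      ∑ ℓ ∈ univ.filter (fun ℓ : Fin n => (ℓ : ℕ) < n - 1),
        L (max h ℓ) (min h ℓ) = 0) ∧
    (∀ m : ℕ, m < n →
      (∑ p ∈ univ.filter (fun p : Fin n × Fin n =>
          (p.2 : ℕ) ≤ (p.1 : ℕ) ∧ (p.1 : ℕ) ≠ n - 2 ∧ (p.2 : ℕ) ≠ n - 2 ∧
            ((p.1 : ℕ) + (p.2 : ℕ)) % n = m),
          L p.1 p.2) + L ⟨n - 1, by omega⟩ ⟨n - 2, by omega⟩ = 0) ∧
    (∀ h : Fin n, (h : ℕ) < n - 2 →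
      ∑ ℓ ∈ univ.filter (fun ℓ : Fin n => (ℓ : ℕ) ≠ n - 2),
        L (min h ℓ) (max h ℓ) = 0) ∧
    (∀ m : ℕ, m < n →
      (∑ p ∈ univ.filter (fun p : Fin n × Fin n =>
          (p.1 : ℕ) ≤ (p.2 : ℕ) ∧ (p.1 : ℕ) < n - 1 ∧ (p.2 : ℕ) < n - 1 ∧
            ((p.1 : ℕ) + (p.2 : ℕ)) % n = m),
          L p.1 p.2) + L ⟨n - 2, by omega⟩ ⟨n - 1, by omega⟩ = 0)}

namespace CG4Proof

lemma z2_add_eq_zero : ∀ a b : ZMod 2, a + b = 0 ↔ a = b := by decide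

lemma z2_add_add_eq_zero : ∀ a b c : ZMod 2, a + b + c = 0 ↔ a = b + c := by decide

/-- Abstract environment capturing the simplified parity equations. -/
structure Env (n : ℕ) [NeZero n] where
  I : ZMod n
  J : ZMod n
  c : ZMod n
  c' : ZMod n
  P : ZMod n → ZMod 2
  Q : ZMod n → ZMod 2
  P' : ZMod n → ZMod 2
  Q' : ZMod n → ZMod 2
  W : ZMod 2
  W' : ZMod 2
  hIJ : I ≠ J
  hcc : c ≠ c'
  e1 : ∀ h, h ≠ I → h ≠ J → h ≠ c → h ≠ c' →
    (if I ≠ c' then P h else 0) + (if J ≠ c' then Q h else 0) = 0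
  e1' : ∀ h, h ≠ I → h ≠ J → h ≠ c → h ≠ c' →
    (if I ≠ c then P' h else 0) + (if J ≠ c then Q' h else 0) = 0
  e2 : I ≠ c → I ≠ c' → ∑ t ∈ Finset.univ.erase c', P t = 0
  e2q : J ≠ c → J ≠ c' → ∑ t ∈ Finset.univ.erase c', Q t = 0
  e2' : I ≠ c → I ≠ c' → ∑ t ∈ Finset.univ.erase c, P' t = 0
  e2q' : J ≠ c → J ≠ c' → ∑ t ∈ Finset.univ.erase c, Q' t = 0
  e3 : ∀ a, a ≠ J →
    (if I ≠ c ∧ a ≠ c then P a else 0)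
      + (if J ≠ c ∧ a - (J - I) ≠ c then Q (a - (J - I)) else 0) + W = 0
  e3d : (if I ≠ c ∧ J ≠ c then Q I else 0) + W = 0
  e3' : ∀ a, a ≠ J →
    (if I ≠ c' ∧ a ≠ c' then P' a else 0)
      + (if J ≠ c' ∧ a - (J - I) ≠ c' then Q' (a - (J - I)) else 0) + W' = 0
  e3d' : (if I ≠ c' ∧ J ≠ c' then Q' I else 0) + W' = 0
  l1 : P I = P' I
  l2 : Q J = Q' J
  l3 : P J = Q I
  l3' : P' J = Q' I
  hW0 : I ≠ c → I ≠ c' → J ≠ c → J ≠ c' → W = 0 ∧ W' = 0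
  hWJc : J = c → W = Q c' ∧ W' = Q' c'
  hWJc' : J = c' → W = Q c ∧ W' = Q' c
  hWIc : I = c → W = P c' ∧ W' = P' c'
  hWIc' : I = c' → W = P c ∧ W' = P' c

variable {n : ℕ} [NeZero n]

/-- Mirror transform: swap the lower and upper triangle data. -/
def Env.mirror (E : Env n) : Env n where
  I := E.I
  J := E.J
  c := E.c'
  c' := E.c
  P := E.P'
  Q := E.Q'
  P' := E.P
  Q' := E.Q
  W := E.W'
  W' := E.W
  hIJ := E.hIJ
  hcc := E.hcc.symm
  e1 := fun h h1 h2 h3 h4 => E.e1' h h1 h2 h4 h3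
  e1' := fun h h1 h2 h3 h4 => E.e1 h h1 h2 h4 h3
  e2 := fun h1 h2 => E.e2' h2 h1
  e2q := fun h1 h2 => E.e2q' h2 h1
  e2' := fun h1 h2 => E.e2 h2 h1
  e2q' := fun h1 h2 => E.e2q h2 h1
  e3 := E.e3'
  e3d := E.e3d'
  e3' := E.e3
  e3d' := E.e3d
  l1 := E.l1.symm
  l2 := E.l2.symm
  l3 := E.l3'
  l3' := E.l3
  hW0 := fun h1 h2 h3 h4 => (E.hW0 h2 h1 h4 h3).symm
  hWJc := fun h => ⟨(E.hWJc' h).2, (E.hWJc' h).1⟩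
  hWJc' := fun h => ⟨(E.hWJc h).2, (E.hWJc h).1⟩
  hWIc := fun h => ⟨(E.hWIc' h).2, (E.hWIc' h).1⟩
  hWIc' := fun h => ⟨(E.hWIc h).2, (E.hWIc h).1⟩

/-- Swap transform: swap the roles of the two erased nodes. -/
def Env.swap (E : Env n) : Env n where
  I := E.J
  J := E.I
  c := E.c
  c' := E.c'
  P := E.Q
  Q := E.P
  P' := E.Q'
  Q' := E.P'
  W := E.W
  W' := E.W'
  hIJ := E.hIJ.symm
  hcc := E.hcc
  e1 := fun h h1 h2 h3 h4 => by
    have := E.e1 h h2 h1 h3 h4; rw [add_comm] at this; exact this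
  e1' := fun h h1 h2 h3 h4 => by
    have := E.e1' h h2 h1 h3 h4; rw [add_comm] at this; exact this
  e2 := E.e2q
  e2q := E.e2
  e2' := E.e2q'
  e2q' := E.e2'
  e3 := fun a ha => by
    have ha' : a - (E.I - E.J) ≠ E.J := fun h => ha (by linear_combination h)
    have e := E.e3 (a - (E.I - E.J)) ha'
    have hx : a - (E.I - E.J) - (E.J - E.I) = a := by ring
    rw [hx] at e
    linear_combination e
  e3d := by
    have e := E.e3d
    rw [E.l3]
    by_cases h : E.I ≠ E.c ∧ E.J ≠ E.c
    · rw [if_pos ⟨h.2, h.1⟩]; rwa [if_pos h] at e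
    · rw [if_neg (fun hh => h ⟨hh.2, hh.1⟩)]; rwa [if_neg h] at e
  e3' := fun a ha => by
    have ha' : a - (E.I - E.J) ≠ E.J := fun h => ha (by linear_combination h)
    have e := E.e3' (a - (E.I - E.J)) ha'
    have hx : a - (E.I - E.J) - (E.J - E.I) = a := by ring
    rw [hx] at e
    linear_combination e
  e3d' := by
    have e := E.e3d'
    rw [E.l3']
    by_cases h : E.I ≠ E.c' ∧ E.J ≠ E.c'
    · rw [if_pos ⟨h.2, h.1⟩]; rwa [if_pos h] at e
    · rw [if_neg (fun hh => h ⟨hh.2, hh.1⟩)]; rwa [if_neg h] at e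
  l1 := E.l2
  l2 := E.l1
  l3 := E.l3.symm
  l3' := E.l3'.symm
  hW0 := fun h1 h2 h3 h4 => E.hW0 h3 h4 h1 h2
  hWJc := E.hWIc
  hWJc' := E.hWIc'
  hWIc := E.hWJc
  hWIc' := E.hWJc'

/-- The target conclusion. -/
def Env.AllZero (E : Env n) : Prop :=
  ∀ t, E.P t = 0 ∧ E.Q t = 0 ∧ E.P' t = 0 ∧ E.Q' t = 0

lemma Env.allZero_of_mirror (E : Env n) (h : E.mirror.AllZero) : E.AllZero := by
  intro t
  obtain ⟨a, b, c, d⟩ := h t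
  exact ⟨c, d, a, b⟩

lemma Env.allZero_of_swap (E : Env n) (h : E.swap.AllZero) : E.AllZero := by
  intro t
  obtain ⟨a, b, c, d⟩ := h t
  exact ⟨b, a, d, c⟩

/-- Case IV: the two erased nodes are exactly the special ones. -/
theorem Env.caseIV (E : Env n) (hI : E.I = E.c) (hJ : E.J = E.c') : E.AllZero := by
  have hJc : E.J ≠ E.c := by rw [hJ]; exact E.hcc.symm
  have hIc' : E.I ≠ E.c' := by rw [hI]; exact E.hcc
  have hW : E.W = E.Q E.c := (E.hWJc' hJ).1
  have hW' : E.W' = E.Q' E.c := (E.hWJc' hJ).2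
  have hW0 : E.W = 0 := by
    have e := E.e3d
    rw [if_neg (by simp [hI])] at e
    simpa using e
  have hW'0 : E.W' = 0 := by
    have e := E.e3d'
    rw [if_neg (by simp [hJ])] at e
    simpa using e
  -- all of Q vanishes
  have hQ : ∀ b, E.Q b = 0 := by
    intro b
    by_cases hb : b = E.I
    · rw [hb, hI, ← hW, hW0]
    · have ha : b + (E.J - E.I) ≠ E.J := fun h => hb (by linear_combination h)
      have e := E.e3 (b + (E.J - E.I)) ha
      rw [if_neg (by simp [hI])] at e
      have hbb : b + (E.J - E.I) - (E.J - E.I) = b := by ring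
      rw [hbb, if_pos ⟨hJc, by rw [← hI]; exact hb⟩] at e
      rw [hW0] at e
      simpa using e
  -- all of P' vanishes
  have hP' : ∀ a, E.P' a = 0 := by
    intro a
    by_cases hb : a = E.J
    · rw [hb, E.l3', hI, ← hW', hW'0]
    · have e := E.e3' a hb
      rw [if_pos ⟨hIc', by rw [← hJ]; exact hb⟩] at e
      rw [if_neg (by simp [hJ])] at e
      rw [hW'0] at e
      simpa using e
  -- P
  have hP : ∀ a, E.P a = 0 := by
    intro a
    by_cases h1 : a = E.I
    · rw [h1, E.l1, hP']
    by_cases h2 : a = E.J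
    · rw [h2, E.l3, hQ]
    · have e := E.e1 a h1 h2 (by rw [← hI]; exact h1) (by rw [← hJ]; exact h2)
      rw [if_pos hIc', if_neg (by simp [hJ])] at e
      simpa using e
  -- Q'
  have hQ' : ∀ a, E.Q' a = 0 := by
    intro a
    by_cases h1 : a = E.I
    · rw [h1, hI, ← hW', hW'0]
    by_cases h2 : a = E.J
    · rw [h2, ← E.l2, hQ]
    · have e := E.e1' a h1 h2 (by rw [← hI]; exact h1) (by rw [← hJ]; exact h2)
      rw [if_neg (by simp [hI]), if_pos hJc] at e
      simpa using e
  exact fun t => ⟨hP t, hQ t, hP' t, hQ' t⟩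

/-- Case III: `J` is the special node `c'`, while `I` is generic. -/
theorem Env.caseIII (E : Env n) (hJ : E.J = E.c') (hIc : E.I ≠ E.c) (hIc' : E.I ≠ E.c') :
    E.AllZero := by
  have hd : E.J - E.I ≠ 0 := sub_ne_zero.mpr E.hIJ.symm
  have hJc : E.J ≠ E.c := by rw [hJ]; exact E.hcc.symm
  have hW : E.W = E.Q E.c := (E.hWJc' hJ).1
  have hW' : E.W' = E.Q' E.c := (E.hWJc' hJ).2
  -- upper collapse
  have hW'0 : E.W' = 0 := by
    have e := E.e3d'
    rw [if_neg (by simp [hJ])] at e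
    simpa using e
  have hP'g : ∀ a, a ≠ E.J → E.P' a = 0 := by
    intro a ha
    have e := E.e3' a ha
    rw [if_pos ⟨hIc', by rw [← hJ]; exact ha⟩, if_neg (by simp [hJ]), hW'0] at e
    simpa using e
  have hP' : ∀ a, E.P' a = 0 := by
    intro a
    by_cases ha : a = E.J
    · rw [ha]
      have e := E.e2' hIc hIc'
      have heq : ∑ t ∈ Finset.univ.erase E.c, E.P' t = E.P' E.J := by
        apply Finset.sum_eq_single_of_mem
        · exact Finset.mem_erase.mpr ⟨by rw [hJ]; exact E.hcc.symm, Finset.mem_univ _⟩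
        · intro b _ hb; exact hP'g b hb
      rw [heq] at e
      exact e
    · exact hP'g a ha
  -- Q' off special points
  have hQ'g : ∀ h, h ≠ E.I → h ≠ E.J → h ≠ E.c → h ≠ E.c' → E.Q' h = 0 := by
    intro h hh1 hh2 hh3 hh4
    have e := E.e1' h hh1 hh2 hh3 hh4
    rw [if_pos hIc, if_pos hJc, hP' h] at e
    simpa using e
  have hQ'I : E.Q' E.I = 0 := by rw [← E.l3', hP']
  have hQ'c : E.Q' E.c = 0 := by rw [← hW', hW'0]
  -- lower: P off special points
  have hPg : ∀ h, h ≠ E.I → h ≠ E.J → h ≠ E.c → h ≠ E.c' → E.P h = 0 := by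
    intro h hh1 hh2 hh3 hh4
    have e := E.e1 h hh1 hh2 hh3 hh4
    rw [if_pos hIc', if_neg (by simp [hJ])] at e
    simpa using e
  have hPI : E.P E.I = 0 := by rw [E.l1, hP']
  -- W = 0
  have hW0 : E.W = 0 := by
    have ha : E.c + (E.J - E.I) ≠ E.J := by
      intro h; exact hIc.symm (by linear_combination h)
    have e := E.e3 (E.c + (E.J - E.I)) ha
    have hcc2 : E.c + (E.J - E.I) ≠ E.c := by
      intro h; exact hd (by linear_combination h)
    rw [if_pos ⟨hIc, hcc2⟩] at e
    rw [if_neg (by intro h; exact h.2 (by ring))] at e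
    by_cases hcd : E.c + (E.J - E.I) = E.I
    · rw [hcd, hPI] at e; simpa using e
    · rw [hPg _ hcd ha hcc2 (by rw [← hJ]; exact ha)] at e
      simpa using e
  have hQc : E.Q E.c = 0 := by rw [← hW, hW0]
  have hQI : E.Q E.I = 0 := by
    have e := E.e3d
    rw [if_pos ⟨hIc, hJc⟩, hW0] at e
    simpa using e
  have hPJ : E.P E.J = 0 := by rw [E.l3, hQI]
  -- Q (c - d) = Q c = 0
  have hQcd : E.Q (E.c - (E.J - E.I)) = 0 := by
    have e := E.e3 E.c (by rw [hJ]; exact E.hcc)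
    rw [if_neg (by intro h; exact h.2 rfl)] at e
    rw [if_pos ⟨hJc, fun h => hd (by linear_combination -h)⟩, hW0] at e
    simpa using e
  -- Q (I - d) = 0
  have hQId : E.Q (E.I - (E.J - E.I)) = 0 := by
    by_cases hic : E.I - (E.J - E.I) = E.c
    · rw [hic, hQc]
    · have e := E.e3 E.I E.hIJ
      rw [if_pos ⟨hIc, hIc⟩, if_pos ⟨hJc, hic⟩, hW0, hPI] at e
      simpa using e
  -- all of Q
  have hQ : ∀ b, E.Q b = 0 := by
    intro b
    by_cases hb1 : b = E.I
    · rw [hb1, hQI]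
    by_cases hb2 : b = E.I - (E.J - E.I)
    · rw [hb2, hQId]
    by_cases hb3 : b = E.c - (E.J - E.I)
    · rw [hb3, hQcd]
    by_cases hb4 : b = E.c
    · rw [hb4, hQc]
    · -- generic: use e3 at a = b + d
      have ha : b + (E.J - E.I) ≠ E.J := fun h => hb1 (by linear_combination h)
      have e := E.e3 (b + (E.J - E.I)) ha
      have hac : b + (E.J - E.I) ≠ E.c := fun h => hb3 (by linear_combination h)
      rw [if_pos ⟨hIc, hac⟩] at e
      have hbb : b + (E.J - E.I) - (E.J - E.I) = b := by ring
      rw [hbb, if_pos ⟨hJc, hb4⟩, hW0] at e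
      have hPa : E.P (b + (E.J - E.I)) = 0 := by
        by_cases hx1 : b + (E.J - E.I) = E.I
        · rw [hx1, hPI]
        by_cases hx2 : b + (E.J - E.I) = E.J
        · rw [hx2, hPJ]
        · exact hPg _ hx1 hx2 hac (by rw [← hJ]; exact hx2)
      rw [hPa] at e
      simpa using e
  -- all of P
  have hP : ∀ a, E.P a = 0 := by
    intro a
    by_cases h1 : a = E.I
    · rw [h1, hPI]
    by_cases h2' : a = E.J
    · rw [h2', hPJ]
    by_cases h3 : a = E.c
    · rw [h3]
      have e := E.e2 hIc hIc'
      have heq : ∑ t ∈ Finset.univ.erase E.c', E.P t = E.P E.c := by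
        apply Finset.sum_eq_single_of_mem
        · exact Finset.mem_erase.mpr ⟨E.hcc, Finset.mem_univ _⟩
        · intro b hbmem hb
          by_cases hb1 : b = E.I
          · rw [hb1, hPI]
          by_cases hb2 : b = E.J
          · rw [hb2, hPJ]
          · exact hPg b hb1 hb2 hb (Finset.mem_erase.mp hbmem).1
      rw [heq] at e
      exact e
    · exact hPg a h1 h2' h3 (by rw [← hJ]; exact h2')
  -- all of Q'
  have hQ' : ∀ a, E.Q' a = 0 := by
    intro a
    by_cases h1 : a = E.I
    · rw [h1, hQ'I]
    by_cases h2' : a = E.J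
    · rw [h2', ← E.l2, hQ]
    by_cases h3 : a = E.c
    · rw [h3, hQ'c]
    · exact hQ'g a h1 h2' h3 (by rw [← hJ]; exact h2')
  exact fun t => ⟨hP t, hQ t, hP' t, hQ' t⟩


section CaseI

variable {n : ℕ} [NeZero n] [Fact (Nat.Prime n)]

/-- Case I: both erased nodes are generic; chain argument. Assumes the `c`-breakpoint
comes before the `c'`-breakpoint along the chain. -/
theorem Env.caseI (hn : 5 ≤ n) (E : Env n)
    (hIc : E.I ≠ E.c) (hIc' : E.I ≠ E.c') (hJc : E.J ≠ E.c) (hJc' : E.J ≠ E.c')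
    (hlt : ((E.c - E.J) * (E.J - E.I)⁻¹).val < ((E.c' - E.J) * (E.J - E.I)⁻¹).val) :
    E.AllZero := by
  have hd : E.J - E.I ≠ 0 := sub_ne_zero.mpr E.hIJ.symm
  obtain ⟨hW0, hW'0⟩ := E.hW0 hIc hIc' hJc hJc'
  set T : ℕ → ZMod n := fun r => E.J + (r : ZMod n) * (E.J - E.I) with hT
  set r1 : ℕ := ((E.c - E.J) * (E.J - E.I)⁻¹).val with hr1def
  set r2 : ℕ := ((E.c' - E.J) * (E.J - E.I)⁻¹).val with hr2def
  have hcastval : ∀ z : ZMod n, ((z.val : ℕ) : ZMod n) = z := fun z => by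
    rw [ZMod.natCast_val, ZMod.cast_id]
  have hT0 : T 0 = E.J := by simp [hT]
  have hTr1 : T r1 = E.c := by
    show E.J + ((r1 : ℕ) : ZMod n) * (E.J - E.I) = E.c
    rw [hr1def, hcastval]
    field_simp
    ring
  have hTr2 : T r2 = E.c' := by
    show E.J + ((r2 : ℕ) : ZMod n) * (E.J - E.I) = E.c'
    rw [hr2def, hcastval]
    field_simp
    ring
  have hn1cast : ((n - 1 : ℕ) : ZMod n) = -1 := by
    rw [Nat.cast_sub (by omega : 1 ≤ n), ZMod.natCast_self]; ring
  have hTn1 : T (n-1) = E.I := by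
    show E.J + ((n - 1 : ℕ) : ZMod n) * (E.J - E.I) = E.I
    rw [hn1cast]; ring
  have hTinj : ∀ r s : ℕ, r < n → s < n → T r = T s → r = s := by
    intro r s hr hs h
    have h2 : (r : ZMod n) * (E.J - E.I) = (s : ZMod n) * (E.J - E.I) := by
      have := h
      simp only [hT] at this
      linear_combination this
    have h3 : (r : ZMod n) = (s : ZMod n) := mul_right_cancel₀ hd h2
    have := congrArg ZMod.val h3
    rwa [ZMod.val_cast_of_lt hr, ZMod.val_cast_of_lt hs] at this
  have hr1n : r1 < n := ZMod.val_lt _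
  have hr2n : r2 < n := ZMod.val_lt _
  have hr1pos : 0 < r1 := by
    rcases Nat.eq_zero_or_pos r1 with h | h
    · exact absurd (by rw [← hTr1, h, hT0]) hJc
    · exact h
  have hr2pos : 0 < r2 := by
    rcases Nat.eq_zero_or_pos r2 with h | h
    · exact absurd (by rw [← hTr2, h, hT0]) hJc'
    · exact h
  have hr1top : r1 < n - 1 := by
    rcases Nat.lt_or_ge r1 (n-1) with h | h
    · exact h
    · have : r1 = n - 1 := by omega
      exact absurd (by rw [← hTr1, this, hTn1]) hIc
  have hr2top : r2 < n - 1 := by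
    rcases Nat.lt_or_ge r2 (n-1) with h | h
    · exact h
    · have : r2 = n - 1 := by omega
      exact absurd (by rw [← hTr2, this, hTn1]) hIc'
  have hTsub : ∀ r : ℕ, T (r+1) - (E.J - E.I) = T r := by
    intro r; simp only [hT]; push_cast; ring
  -- basic step lemmas
  have stepP : ∀ r : ℕ, r + 1 < n → r + 1 ≠ r1 → r ≠ r1 → E.P (T (r+1)) = E.Q (T r) := by
    intro r hrn hne1 hne0
    have haJ : T (r+1) ≠ E.J := by
      rw [← hT0]; exact fun h => by have := hTinj _ _ hrn (by omega) h; omega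
    have e := E.e3 (T (r+1)) haJ
    have hac : T (r+1) ≠ E.c := by
      rw [← hTr1]; exact fun h => hne1 (hTinj _ _ hrn hr1n h)
    have hbc : T (r+1) - (E.J - E.I) ≠ E.c := by
      rw [hTsub, ← hTr1]
      exact fun h => hne0 (hTinj _ _ (by omega) hr1n h)
    rw [if_pos ⟨hIc, hac⟩, if_pos ⟨hJc, hbc⟩, hW0, hTsub] at e
    have := (z2_add_add_eq_zero _ _ _).mp e
    simpa using this
  have stepP' : ∀ r : ℕ, r + 1 < n → r + 1 ≠ r2 → r ≠ r2 → E.P' (T (r+1)) = E.Q' (T r) := by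
    intro r hrn hne1 hne0
    have haJ : T (r+1) ≠ E.J := by
      rw [← hT0]; exact fun h => by have := hTinj _ _ hrn (by omega) h; omega
    have e := E.e3' (T (r+1)) haJ
    have hac : T (r+1) ≠ E.c' := by
      rw [← hTr2]; exact fun h => hne1 (hTinj _ _ hrn hr2n h)
    have hbc : T (r+1) - (E.J - E.I) ≠ E.c' := by
      rw [hTsub, ← hTr2]
      exact fun h => hne0 (hTinj _ _ (by omega) hr2n h)
    rw [if_pos ⟨hIc', hac⟩, if_pos ⟨hJc', hbc⟩, hW'0, hTsub] at e
    have := (z2_add_add_eq_zero _ _ _).mp e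
    simpa using this
  have nbhd : ∀ r : ℕ, 0 < r → r < n - 1 → r ≠ r1 → r ≠ r2 → E.Q (T r) = E.P (T r) := by
    intro r h0 htop hne1 hne2
    have e := E.e1 (T r)
      (by rw [← hTn1]; exact fun h => by have := hTinj _ _ (by omega) (by omega) h; omega)
      (by rw [← hT0]; exact fun h => by have := hTinj _ _ (by omega) (by omega) h; omega)
      (by rw [← hTr1]; exact fun h => hne1 (hTinj _ _ (by omega) hr1n h))
      (by rw [← hTr2]; exact fun h => hne2 (hTinj _ _ (by omega) hr2n h))
    rw [if_pos hIc', if_pos hJc'] at e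
    exact ((z2_add_eq_zero _ _).mp e).symm
  have nbhd' : ∀ r : ℕ, 0 < r → r < n - 1 → r ≠ r1 → r ≠ r2 → E.Q' (T r) = E.P' (T r) := by
    intro r h0 htop hne1 hne2
    have e := E.e1' (T r)
      (by rw [← hTn1]; exact fun h => by have := hTinj _ _ (by omega) (by omega) h; omega)
      (by rw [← hT0]; exact fun h => by have := hTinj _ _ (by omega) (by omega) h; omega)
      (by rw [← hTr1]; exact fun h => hne1 (hTinj _ _ (by omega) hr1n h))
      (by rw [← hTr2]; exact fun h => hne2 (hTinj _ _ (by omega) hr2n h))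
    rw [if_pos hIc, if_pos hJc] at e
    exact ((z2_add_eq_zero _ _).mp e).symm
  -- the direct facts
  have f1 : E.Q (T (r1 - 1)) = 0 := by
    have e := E.e3 E.c hJc.symm
    rw [if_neg (by simp), if_pos ⟨hJc, fun h => hd (by linear_combination -h)⟩, hW0] at e
    have hcd : E.c - (E.J - E.I) = T (r1 - 1) := by
      rw [← hTsub (r1 - 1), show r1 - 1 + 1 = r1 by omega, hTr1]
    rw [hcd] at e
    simpa using e
  have f2 : E.P (T (r1 + 1)) = 0 := by
    have haJ : T (r1+1) ≠ E.J := by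
      rw [← hT0]; exact fun h => by have := hTinj _ _ (by omega) (by omega) h; omega
    have e := E.e3 (T (r1+1)) haJ
    have hac : T (r1+1) ≠ E.c := by
      rw [← hTr1]; exact fun h => by have := hTinj _ _ (by omega) hr1n h; omega
    have hbc : T (r1+1) - (E.J - E.I) = E.c := by rw [hTsub, hTr1]
    rw [if_pos ⟨hIc, hac⟩, if_neg (by rw [hbc]; simp), hW0] at e
    simpa using e
  have f1' : E.Q' (T (r2 - 1)) = 0 := by
    have e := E.e3' E.c' hJc'.symm
    rw [if_neg (by simp), if_pos ⟨hJc', fun h => hd (by linear_combination -h)⟩, hW'0] at e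
    have hcd : E.c' - (E.J - E.I) = T (r2 - 1) := by
      rw [← hTsub (r2 - 1), show r2 - 1 + 1 = r2 by omega, hTr2]
    rw [hcd] at e
    simpa using e
  have f2' : E.P' (T (r2 + 1)) = 0 := by
    have haJ : T (r2+1) ≠ E.J := by
      rw [← hT0]; exact fun h => by have := hTinj _ _ (by omega) (by omega) h; omega
    have e := E.e3' (T (r2+1)) haJ
    have hac : T (r2+1) ≠ E.c' := by
      rw [← hTr2]; exact fun h => by have := hTinj _ _ (by omega) hr2n h; omega
    have hbc : T (r2+1) - (E.J - E.I) = E.c' := by rw [hTsub, hTr2]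
    rw [if_pos ⟨hIc', hac⟩, if_neg (by rw [hbc]; simp), hW'0] at e
    simpa using e
  have hQI : E.Q E.I = 0 := by
    have e := E.e3d
    rw [if_pos ⟨hIc, hJc⟩, hW0] at e
    simpa using e
  have hQ'I : E.Q' E.I = 0 := by
    have e := E.e3d'
    rw [if_pos ⟨hIc', hJc'⟩, hW'0] at e
    simpa using e
  have hPJ : E.P E.J = 0 := by rw [E.l3, hQI]
  have hP'J : E.P' E.J = 0 := by rw [E.l3', hQ'I]
  -- chains
  have C1 : ∀ r, 1 ≤ r → r < r1 → E.P (T r) = E.Q E.J := by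
    intro r h1
    induction r, h1 using Nat.le_induction with
    | base =>
      intro h2
      rw [show (1:ℕ) = 0 + 1 from rfl, stepP 0 (by omega) (by omega) (by omega), hT0]
    | succ k hk ih =>
      intro h2
      rw [stepP k (by omega) (by omega) (by omega), nbhd k (by omega) (by omega) (by omega)
        (by omega), ih (by omega)]
  have hA : E.Q E.J = 0 := by
    rcases Nat.eq_or_lt_of_le hr1pos with h | h
    · have := f1
      rw [show r1 - 1 = 0 by omega, hT0] at this
      exact this
    · have e := f1
      rw [nbhd (r1-1) (by omega) (by omega) (by omega) (by omega),
        C1 (r1-1) (by omega) (by omega)] at e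
      exact e
  have C3 : ∀ r, r1 + 1 ≤ r → r ≤ r2 → E.P (T r) = 0 := by
    intro r h1
    induction r, h1 using Nat.le_induction with
    | base => intro _; exact f2
    | succ k hk ih =>
      intro h2
      rw [stepP k (by omega) (by omega) (by omega), nbhd k (by omega) (by omega) (by omega)
        (by omega), ih (by omega)]
  have C4 : ∀ r, 1 ≤ r → r ≤ r1 → E.P' (T r) = 0 := by
    intro r h1
    induction r, h1 using Nat.le_induction with
    | base =>
      intro h2
      rw [show (1:ℕ) = 0 + 1 from rfl, stepP' 0 (by omega) (by omega) (by omega), hT0, ← E.l2,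
        hA]
    | succ k hk ih =>
      intro h2
      rw [stepP' k (by omega) (by omega) (by omega), nbhd' k (by omega) (by omega) (by omega)
        (by omega), ih (by omega)]
  have C5a : ∀ r, r1 + 1 ≤ r → r ≤ r2 - 1 → E.P' (T r) = E.Q' E.c := by
    intro r h1
    induction r, h1 using Nat.le_induction with
    | base =>
      intro h2
      rw [show r1 + 1 = r1 + 1 from rfl, stepP' r1 (by omega) (by omega) (by omega), hTr1]
    | succ k hk ih =>
      intro h2
      rw [stepP' k (by omega) (by omega) (by omega), nbhd' k (by omega) (by omega) (by omega)
        (by omega), ih (by omega)]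
  have C5b : E.Q' E.c = 0 := by
    rcases Nat.eq_or_lt_of_le (show r1 + 1 ≤ r2 by omega) with h | h
    · have := f1'
      rw [show r2 - 1 = r1 by omega, hTr1] at this
      exact this
    · have e := f1'
      rw [nbhd' (r2-1) (by omega) (by omega) (by omega) (by omega),
        C5a (r2-1) (by omega) (by omega)] at e
      exact e
  have C6 : ∀ r, r2 + 1 ≤ r → r ≤ n - 1 → E.P' (T r) = 0 := by
    intro r h1
    induction r, h1 using Nat.le_induction with
    | base => intro _; exact f2'
    | succ k hk ih =>
      intro h2
      rw [stepP' k (by omega) (by omega) (by omega), nbhd' k (by omega) (by omega) (by omega)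
        (by omega), ih (by omega)]
  have hP'I : E.P' E.I = 0 := by
    rw [← hTn1]; exact C6 (n-1) (by omega) (by omega)
  have hPI : E.P E.I = 0 := by rw [E.l1, hP'I]
  have C8 : ∀ r, r2 + 1 ≤ r → r ≤ n - 1 → E.P (T r) = E.Q E.c' := by
    intro r h1
    induction r, h1 using Nat.le_induction with
    | base =>
      intro _
      rw [show r2 + 1 = r2 + 1 from rfl, stepP r2 (by omega) (by omega) (by omega), hTr2]
    | succ k hk ih =>
      intro h2
      rw [stepP k (by omega) (by omega) (by omega), nbhd k (by omega) (by omega) (by omega)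
        (by omega), ih (by omega)]
  have hQc' : E.Q E.c' = 0 := by
    have e := C8 (n-1) (by omega) (by omega)
    rw [hTn1, hPI] at e
    exact e.symm
  -- surjectivity of the chain
  have hTsurj : ∀ t : ZMod n, ∃ r : ℕ, r < n ∧ T r = t := by
    intro t
    refine ⟨((t - E.J) * (E.J - E.I)⁻¹).val, ZMod.val_lt _, ?_⟩
    show E.J + (((((t - E.J) * (E.J - E.I)⁻¹).val : ℕ)) : ZMod n) * (E.J - E.I) = t
    rw [hcastval]
    field_simp
    ring
  -- value tables
  have hPval : ∀ t, t ≠ E.c → E.P t = 0 := by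
    intro t htc
    obtain ⟨r, hrn, hTr⟩ := hTsurj t
    rw [← hTr]
    by_cases h0 : r = 0
    · rw [h0, hT0]; exact hPJ
    by_cases hlast : r = n - 1
    · rw [hlast, hTn1]; exact hPI
    by_cases hx : r = r1
    · exact absurd (by rw [← hTr, hx, hTr1]) htc
    by_cases hy : r < r1
    · rw [C1 r (by omega) hy, hA]
    by_cases hz : r ≤ r2
    · exact C3 r (by omega) hz
    · rw [C8 r (by omega) (by omega), hQc']
  have hPc : E.P E.c = 0 := by
    have e := E.e2 hIc hIc'
    have heq : ∑ t ∈ Finset.univ.erase E.c', E.P t = E.P E.c := by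
      apply Finset.sum_eq_single_of_mem
      · exact Finset.mem_erase.mpr ⟨E.hcc, Finset.mem_univ _⟩
      · intro b _ hb; exact hPval b hb
    rw [heq] at e
    exact e
  have hP : ∀ t, E.P t = 0 := by
    intro t
    by_cases h : t = E.c
    · rw [h]; exact hPc
    · exact hPval t h
  have hQval : ∀ t, t ≠ E.c → E.Q t = 0 := by
    intro t htc
    obtain ⟨r, hrn, hTr⟩ := hTsurj t
    rw [← hTr]
    by_cases h0 : r = 0
    · rw [h0, hT0]; exact hA
    by_cases hlast : r = n - 1
    · rw [hlast, hTn1]; exact hQI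
    by_cases hx : r = r1
    · exact absurd (by rw [← hTr, hx, hTr1]) htc
    by_cases hy : r = r2
    · rw [hy, hTr2]; exact hQc'
    · rw [nbhd r (by omega) (by omega) hx hy]
      exact hPval _ (by rw [hTr]; exact htc)
  have hQc : E.Q E.c = 0 := by
    have e := E.e2q hJc hJc'
    have heq : ∑ t ∈ Finset.univ.erase E.c', E.Q t = E.Q E.c := by
      apply Finset.sum_eq_single_of_mem
      · exact Finset.mem_erase.mpr ⟨E.hcc, Finset.mem_univ _⟩
      · intro b hbmem hb
        by_cases hbc : b = E.c
        · exact absurd hbc hb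
        · exact hQval b hbc
    rw [heq] at e
    exact e
  have hQ : ∀ t, E.Q t = 0 := by
    intro t
    by_cases h : t = E.c
    · rw [h]; exact hQc
    · exact hQval t h
  have hP'val : ∀ t, t ≠ E.c' → E.P' t = 0 := by
    intro t htc
    obtain ⟨r, hrn, hTr⟩ := hTsurj t
    rw [← hTr]
    by_cases h0 : r = 0
    · rw [h0, hT0]; exact hP'J
    by_cases hlast : r = n - 1
    · rw [hlast, hTn1]; exact hP'I
    by_cases hx : r = r2
    · exact absurd (by rw [← hTr, hx, hTr2]) htc
    by_cases hy : r ≤ r1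
    · exact C4 r (by omega) hy
    by_cases hz : r < r2
    · rw [C5a r (by omega) (by omega), C5b]
    · exact C6 r (by omega) (by omega)
  have hP'c' : E.P' E.c' = 0 := by
    have e := E.e2' hIc hIc'
    have heq : ∑ t ∈ Finset.univ.erase E.c, E.P' t = E.P' E.c' := by
      apply Finset.sum_eq_single_of_mem
      · exact Finset.mem_erase.mpr ⟨E.hcc.symm, Finset.mem_univ _⟩
      · intro b _ hb; exact hP'val b hb
    rw [heq] at e
    exact e
  have hP' : ∀ t, E.P' t = 0 := by
    intro t
    by_cases h : t = E.c'
    · rw [h]; exact hP'c'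
    · exact hP'val t h
  have hQ'val : ∀ t, t ≠ E.c' → E.Q' t = 0 := by
    intro t htc
    obtain ⟨r, hrn, hTr⟩ := hTsurj t
    rw [← hTr]
    by_cases h0 : r = 0
    · rw [h0, hT0, ← E.l2]; exact hA
    by_cases hlast : r = n - 1
    · rw [hlast, hTn1]; exact hQ'I
    by_cases hx : r = r2
    · exact absurd (by rw [← hTr, hx, hTr2]) htc
    by_cases hy : r = r1
    · rw [hy, hTr1]; exact C5b
    · rw [nbhd' r (by omega) (by omega) hy hx]
      exact hP'val _ (by rw [hTr]; exact htc)
  have hQ'c' : E.Q' E.c' = 0 := by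
    have e := E.e2q' hJc hJc'
    have heq : ∑ t ∈ Finset.univ.erase E.c, E.Q' t = E.Q' E.c' := by
      apply Finset.sum_eq_single_of_mem
      · exact Finset.mem_erase.mpr ⟨E.hcc.symm, Finset.mem_univ _⟩
      · intro b _ hb
        by_cases hbc : b = E.c'
        · exact absurd hbc hb
        · exact hQ'val b hbc
    rw [heq] at e
    exact e
  have hQ' : ∀ t, E.Q' t = 0 := by
    intro t
    by_cases h : t = E.c'
    · rw [h]; exact hQ'c'
    · exact hQ'val t h
  exact fun t => ⟨hP t, hQ t, hP' t, hQ' t⟩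

/-- Master theorem: every environment has all-zero labels. -/
theorem Env.allZero (hn : 5 ≤ n) (E : Env n) : E.AllZero := by
  have hd : E.J - E.I ≠ 0 := sub_ne_zero.mpr E.hIJ.symm
  by_cases hJc' : E.J = E.c'
  · by_cases hIc : E.I = E.c
    · exact E.caseIV hIc hJc'
    · exact E.caseIII hJc' hIc (fun h => E.hIJ (h.trans hJc'.symm))
  by_cases hJc : E.J = E.c
  · by_cases hIc' : E.I = E.c'
    · exact E.allZero_of_mirror (E.mirror.caseIV hIc' hJc)
    · exact E.allZero_of_mirror (E.mirror.caseIII hJc hIc'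
        (fun h => E.hIJ (h.trans hJc.symm)))
  by_cases hIc' : E.I = E.c'
  · exact E.allZero_of_swap (E.swap.caseIII hIc' hJc hJc')
  by_cases hIc : E.I = E.c
  · exact E.allZero_of_swap (E.swap.allZero_of_mirror (E.swap.mirror.caseIII hIc hJc' hJc))
  · rcases lt_trichotomy (((E.c - E.J) * (E.J - E.I)⁻¹).val)
      (((E.c' - E.J) * (E.J - E.I)⁻¹).val) with h | h | h
    · exact E.caseI hn hIc hIc' hJc hJc' h
    · exfalso
      apply E.hcc
      have h2 : (E.c - E.J) * (E.J - E.I)⁻¹ = (E.c' - E.J) * (E.J - E.I)⁻¹ :=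
        ZMod.val_injective _ h
      have h3 := mul_right_cancel₀ (inv_ne_zero hd) h2
      linear_combination h3
    · exact E.allZero_of_mirror (E.mirror.caseI hn hIc' hIc hJc' hJc h)

end CaseI


section Helpers

lemma sum_filter_subset_support {α : Type*} [Fintype α] [DecidableEq α]
    (f : α → ZMod 2) (P : α → Prop) [DecidablePred P] (s : Finset α)
    (h : ∀ a, P a → a ∉ s → f a = 0) :
    ∑ a ∈ Finset.univ.filter P, f a = ∑ a ∈ s.filter P, f a := by
  rw [← Finset.sum_filter_add_sum_filter_not (Finset.univ.filter P) (· ∈ s) f]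
  have h1 : (Finset.univ.filter P).filter (· ∈ s) = s.filter P := by
    ext a; simp [and_comm]
  have h2 : ∑ a ∈ (Finset.univ.filter P).filter (· ∉ s), f a = 0 := by
    apply Finset.sum_eq_zero; intro a ha; simp only [Finset.mem_filter,
      Finset.mem_univ, true_and] at ha; exact h a ha.1 ha.2
  rw [h1, h2, add_zero]

lemma sum_filter_pair' {α : Type*} [DecidableEq α] (f : α → ZMod 2) (P : α → Prop)
    [DecidablePred P] (x y : α) (hxy : x ≠ y) :
    ∑ a ∈ ({x, y} : Finset α).filter P, f a
      = (if P x then f x else 0) + (if P y then f y else 0) := by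
  rw [Finset.sum_filter, Finset.sum_pair hxy]

lemma sum_filter_single' {α : Type*} [DecidableEq α] (f : α → ZMod 2) (P : α → Prop)
    [DecidablePred P] (x : α) :
    ∑ a ∈ ({x} : Finset α).filter P, f a = if P x then f x else 0 := by
  rw [Finset.sum_filter, Finset.sum_singleton]

lemma fin_max_coe {n : ℕ} (a b : Fin n) : ((max a b : Fin n) : ℕ) = max (a : ℕ) (b : ℕ) := by
  rcases le_total a b with h | h
  · rw [max_eq_right h, max_eq_right (Fin.le_def.mp h)]
  · rw [max_eq_left h, max_eq_left (Fin.le_def.mp h)]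

lemma fin_min_coe {n : ℕ} (a b : Fin n) : ((min a b : Fin n) : ℕ) = min (a : ℕ) (b : ℕ) := by
  rcases le_total a b with h | h
  · rw [min_eq_left h, min_eq_left (Fin.le_def.mp h)]
  · rw [min_eq_right h, min_eq_right (Fin.le_def.mp h)]

lemma mod_add_unique {n : ℕ} (x : ℕ) (b b' : Fin n)
    (h : (x + (b : ℕ)) % n = (x + (b' : ℕ)) % n) : b = b' := by
  have h2 : (b : ℕ) ≡ (b' : ℕ) [MOD n] := Nat.ModEq.add_left_cancel' x h
  have h3 : (b : ℕ) % n = (b' : ℕ) % n := h2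
  rw [Nat.mod_eq_of_lt b.isLt, Nat.mod_eq_of_lt b'.isLt] at h3
  exact Fin.ext h3

lemma pair_eq_cases {n : ℕ} (a b c d : Fin n) (h1 : max a b = max c d)
    (h2 : min a b = min c d) : (a = c ∧ b = d) ∨ (a = d ∧ b = c) := by
  have H1 : max (a : ℕ) (b : ℕ) = max (c : ℕ) (d : ℕ) := by
    rw [← fin_max_coe, ← fin_max_coe, h1]
  have H2 : min (a : ℕ) (b : ℕ) = min (c : ℕ) (d : ℕ) := by
    rw [← fin_min_coe, ← fin_min_coe, h2]
  have : ((a : ℕ) = (c : ℕ) ∧ (b : ℕ) = (d : ℕ)) ∨ ((a : ℕ) = (d : ℕ) ∧ (b : ℕ) = (c : ℕ)) := by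
    omega
  rcases this with ⟨u, v⟩ | ⟨u, v⟩
  · exact Or.inl ⟨Fin.ext u, Fin.ext v⟩
  · exact Or.inr ⟨Fin.ext u, Fin.ext v⟩

end Helpers


section DiagEval

variable {n : ℕ} (hn : 5 ≤ n) (i j : Fin n) (hij : i ≠ j) (D : Fin n → Fin n → ZMod 2)
  (h0 : ∀ k ℓ : Fin n, k ≠ i → k ≠ j → ℓ ≠ i → ℓ ≠ j → D k ℓ = 0)

include hn hij h0

lemma diag_eval_lower
    (cb : ∀ m : ℕ, m < n → (∑ p ∈ Finset.univ.filter (fun p : Fin n × Fin n =>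
          (p.2 : ℕ) ≤ (p.1 : ℕ) ∧ (p.1 : ℕ) ≠ n - 2 ∧ (p.2 : ℕ) ≠ n - 2 ∧
            ((p.1 : ℕ) + (p.2 : ℕ)) % n = m), D p.1 p.2)
        + D ⟨n - 1, by omega⟩ ⟨n - 2, by omega⟩ = 0)
    (m : ℕ) (hm : m < n) (a b : Fin n)
    (ha : ((i : ℕ) + (a : ℕ)) % n = m) (hb : ((j : ℕ) + (b : ℕ)) % n = m) (haj : a ≠ j) :
    (if (i : ℕ) ≠ n - 2 ∧ (a : ℕ) ≠ n - 2 then D (max i a) (min i a) else 0)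
      + (if (j : ℕ) ≠ n - 2 ∧ (b : ℕ) ≠ n - 2 then D (max j b) (min j b) else 0)
      + D ⟨n - 1, by omega⟩ ⟨n - 2, by omega⟩ = 0 := by
  have e := cb m hm
  have hin : ∀ p : Fin n × Fin n,
      ((p.2 : ℕ) ≤ (p.1 : ℕ) ∧ (p.1 : ℕ) ≠ n - 2 ∧ (p.2 : ℕ) ≠ n - 2 ∧
        ((p.1 : ℕ) + (p.2 : ℕ)) % n = m) →
      (p.1 = i ∨ p.1 = j ∨ p.2 = i ∨ p.2 = j) →
      p ∈ ({(max i a, min i a), (max j b, min j b)} : Finset (Fin n × Fin n)) := by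
    rintro p ⟨hle, _, _, hsum⟩ hc
    rcases hc with c | c | c | c
    · rw [c] at hsum hle
      have h2a : p.2 = a := mod_add_unique (i : ℕ) p.2 a (hsum.trans ha.symm)
      rw [h2a] at hle
      have hp1 : max i a = i := max_eq_left (Fin.le_def.mpr hle)
      have hp2 : min i a = a := min_eq_right (Fin.le_def.mpr hle)
      have : p = (max i a, min i a) := by
        rw [hp1, hp2]; exact Prod.ext c h2a
      rw [this]; exact Finset.mem_insert_self _ _
    · rw [c] at hsum hle
      have h2b : p.2 = b := mod_add_unique (j : ℕ) p.2 b (hsum.trans hb.symm)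
      rw [h2b] at hle
      have hp1 : max j b = j := max_eq_left (Fin.le_def.mpr hle)
      have hp2 : min j b = b := min_eq_right (Fin.le_def.mpr hle)
      have : p = (max j b, min j b) := by
        rw [hp1, hp2]; exact Prod.ext c h2b
      rw [this]; exact Finset.mem_insert_of_mem (Finset.mem_singleton_self _)
    · rw [c] at hsum hle
      rw [Nat.add_comm] at hsum
      have h1a : p.1 = a := mod_add_unique (i : ℕ) p.1 a (hsum.trans ha.symm)
      rw [h1a] at hle
      have hp1 : max i a = a := max_eq_right (Fin.le_def.mpr hle)
      have hp2 : min i a = i := min_eq_left (Fin.le_def.mpr hle)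
      have : p = (max i a, min i a) := by
        rw [hp1, hp2]; exact Prod.ext h1a c
      rw [this]; exact Finset.mem_insert_self _ _
    · rw [c] at hsum hle
      rw [Nat.add_comm] at hsum
      have h1b : p.1 = b := mod_add_unique (j : ℕ) p.1 b (hsum.trans hb.symm)
      rw [h1b] at hle
      have hp1 : max j b = b := max_eq_right (Fin.le_def.mpr hle)
      have hp2 : min j b = j := min_eq_left (Fin.le_def.mpr hle)
      have : p = (max j b, min j b) := by
        rw [hp1, hp2]; exact Prod.ext h1b c
      rw [this]; exact Finset.mem_insert_of_mem (Finset.mem_singleton_self _)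
  have hne : (max i a, min i a) ≠ (max j b, min j b) := by
    intro hpq
    rw [Prod.ext_iff] at hpq
    rcases pair_eq_cases i a j b hpq.1 hpq.2 with ⟨u, _⟩ | ⟨_, v⟩
    · exact hij u
    · exact haj v
  rw [sum_filter_subset_support _ _ ({(max i a, min i a), (max j b, min j b)} :
      Finset (Fin n × Fin n)) (by
    intro p hp hps
    by_cases c1 : p.1 = i
    · exact absurd (hin p hp (Or.inl c1)) hps
    by_cases c2 : p.1 = j
    · exact absurd (hin p hp (Or.inr (Or.inl c2))) hps
    by_cases c3 : p.2 = i
    · exact absurd (hin p hp (Or.inr (Or.inr (Or.inl c3)))) hps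
    by_cases c4 : p.2 = j
    · exact absurd (hin p hp (Or.inr (Or.inr (Or.inr c4)))) hps
    · exact h0 _ _ c1 c2 c3 c4)] at e
  rw [sum_filter_pair' _ _ _ _ hne] at e
  have hPi : ((((max i a, min i a) : Fin n × Fin n).2 : ℕ) ≤ (((max i a, min i a) :
        Fin n × Fin n).1 : ℕ) ∧ (((max i a, min i a) : Fin n × Fin n).1 : ℕ) ≠ n - 2 ∧
        (((max i a, min i a) : Fin n × Fin n).2 : ℕ) ≠ n - 2 ∧
        ((((max i a, min i a) : Fin n × Fin n).1 : ℕ) +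
          (((max i a, min i a) : Fin n × Fin n).2 : ℕ)) % n = m)
      ↔ ((i : ℕ) ≠ n - 2 ∧ (a : ℕ) ≠ n - 2) := by
    simp only [fin_max_coe, fin_min_coe]
    constructor
    · rintro ⟨_, x1, x2, _⟩; omega
    · rintro ⟨x1, x2⟩
      refine ⟨by omega, by omega, by omega, ?_⟩
      rw [show max (i : ℕ) (a : ℕ) + min (i : ℕ) (a : ℕ) = (i : ℕ) + (a : ℕ) by omega]
      exact ha
  have hPj : ((((max j b, min j b) : Fin n × Fin n).2 : ℕ) ≤ (((max j b, min j b) :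
        Fin n × Fin n).1 : ℕ) ∧ (((max j b, min j b) : Fin n × Fin n).1 : ℕ) ≠ n - 2 ∧
        (((max j b, min j b) : Fin n × Fin n).2 : ℕ) ≠ n - 2 ∧
        ((((max j b, min j b) : Fin n × Fin n).1 : ℕ) +
          (((max j b, min j b) : Fin n × Fin n).2 : ℕ)) % n = m)
      ↔ ((j : ℕ) ≠ n - 2 ∧ (b : ℕ) ≠ n - 2) := by
    simp only [fin_max_coe, fin_min_coe]
    constructor
    · rintro ⟨_, x1, x2, _⟩; omega
    · rintro ⟨x1, x2⟩
      refine ⟨by omega, by omega, by omega, ?_⟩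
      rw [show max (j : ℕ) (b : ℕ) + min (j : ℕ) (b : ℕ) = (j : ℕ) + (b : ℕ) by omega]
      exact hb
  by_cases hc1 : (i : ℕ) ≠ n - 2 ∧ (a : ℕ) ≠ n - 2 <;>
    by_cases hc2 : (j : ℕ) ≠ n - 2 ∧ (b : ℕ) ≠ n - 2
  · rw [if_pos (hPi.mpr hc1), if_pos (hPj.mpr hc2)] at e
    rw [if_pos hc1, if_pos hc2]; exact e
  · rw [if_pos (hPi.mpr hc1), if_neg (fun hh => hc2 (hPj.mp hh))] at e
    rw [if_pos hc1, if_neg hc2]; exact e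
  · rw [if_neg (fun hh => hc1 (hPi.mp hh)), if_pos (hPj.mpr hc2)] at e
    rw [if_neg hc1, if_pos hc2]; exact e
  · rw [if_neg (fun hh => hc1 (hPi.mp hh)), if_neg (fun hh => hc2 (hPj.mp hh))] at e
    rw [if_neg hc1, if_neg hc2]; exact e

lemma diag_eval_lower_diag
    (cb : ∀ m : ℕ, m < n → (∑ p ∈ Finset.univ.filter (fun p : Fin n × Fin n =>
          (p.2 : ℕ) ≤ (p.1 : ℕ) ∧ (p.1 : ℕ) ≠ n - 2 ∧ (p.2 : ℕ) ≠ n - 2 ∧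
            ((p.1 : ℕ) + (p.2 : ℕ)) % n = m), D p.1 p.2)
        + D ⟨n - 1, by omega⟩ ⟨n - 2, by omega⟩ = 0) :
    (if (i : ℕ) ≠ n - 2 ∧ (j : ℕ) ≠ n - 2 then D (max i j) (min i j) else 0)
      + D ⟨n - 1, by omega⟩ ⟨n - 2, by omega⟩ = 0 := by
  have ha : ((i : ℕ) + (j : ℕ)) % n = ((i : ℕ) + (j : ℕ)) % n := rfl
  have hb : ((j : ℕ) + (i : ℕ)) % n = ((i : ℕ) + (j : ℕ)) % n := by rw [Nat.add_comm]
  have e := cb (((i : ℕ) + (j : ℕ)) % n) (Nat.mod_lt _ (by omega))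
  have hin : ∀ p : Fin n × Fin n,
      ((p.2 : ℕ) ≤ (p.1 : ℕ) ∧ (p.1 : ℕ) ≠ n - 2 ∧ (p.2 : ℕ) ≠ n - 2 ∧
        ((p.1 : ℕ) + (p.2 : ℕ)) % n = ((i : ℕ) + (j : ℕ)) % n) →
      (p.1 = i ∨ p.1 = j ∨ p.2 = i ∨ p.2 = j) →
      p ∈ ({(max i j, min i j)} : Finset (Fin n × Fin n)) := by
    rintro p ⟨hle, _, _, hsum⟩ hc
    rw [Finset.mem_singleton]
    rcases hc with c | c | c | c
    · rw [c] at hsum hle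
      have h2 : p.2 = j := mod_add_unique (i : ℕ) p.2 j (hsum.trans ha.symm)
      rw [h2] at hle
      rw [max_eq_left (Fin.le_def.mpr hle), min_eq_right (Fin.le_def.mpr hle)]
      exact Prod.ext c h2
    · rw [c] at hsum hle
      have h2 : p.2 = i := mod_add_unique (j : ℕ) p.2 i (hsum.trans hb.symm)
      rw [h2] at hle
      rw [max_eq_right (Fin.le_def.mpr hle), min_eq_left (Fin.le_def.mpr hle)]
      exact Prod.ext c h2
    · rw [c] at hsum hle
      rw [Nat.add_comm] at hsum
      have h1 : p.1 = j := mod_add_unique (i : ℕ) p.1 j (hsum.trans ha.symm)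
      rw [h1] at hle
      rw [max_eq_right (Fin.le_def.mpr hle), min_eq_left (Fin.le_def.mpr hle)]
      exact Prod.ext h1 c
    · rw [c] at hsum hle
      rw [Nat.add_comm] at hsum
      have h1 : p.1 = i := mod_add_unique (j : ℕ) p.1 i (hsum.trans hb.symm)
      rw [h1] at hle
      rw [max_eq_left (Fin.le_def.mpr hle), min_eq_right (Fin.le_def.mpr hle)]
      exact Prod.ext h1 c
  rw [sum_filter_subset_support _ _ ({(max i j, min i j)} : Finset (Fin n × Fin n)) (by
    intro p hp hps
    by_cases c1 : p.1 = i
    · exact absurd (hin p hp (Or.inl c1)) hps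
    by_cases c2 : p.1 = j
    · exact absurd (hin p hp (Or.inr (Or.inl c2))) hps
    by_cases c3 : p.2 = i
    · exact absurd (hin p hp (Or.inr (Or.inr (Or.inl c3)))) hps
    by_cases c4 : p.2 = j
    · exact absurd (hin p hp (Or.inr (Or.inr (Or.inr c4)))) hps
    · exact h0 _ _ c1 c2 c3 c4)] at e
  rw [sum_filter_single'] at e
  have hPi : ((((max i j, min i j) : Fin n × Fin n).2 : ℕ) ≤ (((max i j, min i j) :
        Fin n × Fin n).1 : ℕ) ∧ (((max i j, min i j) : Fin n × Fin n).1 : ℕ) ≠ n - 2 ∧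
        (((max i j, min i j) : Fin n × Fin n).2 : ℕ) ≠ n - 2 ∧
        ((((max i j, min i j) : Fin n × Fin n).1 : ℕ) +
          (((max i j, min i j) : Fin n × Fin n).2 : ℕ)) % n = ((i : ℕ) + (j : ℕ)) % n)
      ↔ ((i : ℕ) ≠ n - 2 ∧ (j : ℕ) ≠ n - 2) := by
    simp only [fin_max_coe, fin_min_coe]
    constructor
    · rintro ⟨_, x1, x2, _⟩; omega
    · rintro ⟨x1, x2⟩
      refine ⟨by omega, by omega, by omega, ?_⟩
      rw [show max (i : ℕ) (j : ℕ) + min (i : ℕ) (j : ℕ) = (i : ℕ) + (j : ℕ) by omega]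
  by_cases hc1 : (i : ℕ) ≠ n - 2 ∧ (j : ℕ) ≠ n - 2
  · rw [if_pos (hPi.mpr hc1)] at e
    rw [if_pos hc1]; exact e
  · rw [if_neg (fun hh => hc1 (hPi.mp hh))] at e
    rw [if_neg hc1]; exact e

lemma diag_eval_upper
    (cd : ∀ m : ℕ, m < n → (∑ p ∈ Finset.univ.filter (fun p : Fin n × Fin n =>
          (p.1 : ℕ) ≤ (p.2 : ℕ) ∧ (p.1 : ℕ) < n - 1 ∧ (p.2 : ℕ) < n - 1 ∧
            ((p.1 : ℕ) + (p.2 : ℕ)) % n = m), D p.1 p.2)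
        + D ⟨n - 2, by omega⟩ ⟨n - 1, by omega⟩ = 0)
    (m : ℕ) (hm : m < n) (a b : Fin n)
    (ha : ((i : ℕ) + (a : ℕ)) % n = m) (hb : ((j : ℕ) + (b : ℕ)) % n = m) (haj : a ≠ j) :
    (if (i : ℕ) ≠ n - 1 ∧ (a : ℕ) ≠ n - 1 then D (min i a) (max i a) else 0)
      + (if (j : ℕ) ≠ n - 1 ∧ (b : ℕ) ≠ n - 1 then D (min j b) (max j b) else 0)
      + D ⟨n - 2, by omega⟩ ⟨n - 1, by omega⟩ = 0 := by
  have e := cd m hm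
  have hin : ∀ p : Fin n × Fin n,
      ((p.1 : ℕ) ≤ (p.2 : ℕ) ∧ (p.1 : ℕ) < n - 1 ∧ (p.2 : ℕ) < n - 1 ∧
        ((p.1 : ℕ) + (p.2 : ℕ)) % n = m) →
      (p.1 = i ∨ p.1 = j ∨ p.2 = i ∨ p.2 = j) →
      p ∈ ({(min i a, max i a), (min j b, max j b)} : Finset (Fin n × Fin n)) := by
    rintro p ⟨hle, _, _, hsum⟩ hc
    rcases hc with c | c | c | c
    · rw [c] at hsum hle
      have h2a : p.2 = a := mod_add_unique (i : ℕ) p.2 a (hsum.trans ha.symm)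
      rw [h2a] at hle
      have hp1 : min i a = i := min_eq_left (Fin.le_def.mpr hle)
      have hp2 : max i a = a := max_eq_right (Fin.le_def.mpr hle)
      have : p = (min i a, max i a) := by
        rw [hp1, hp2]; exact Prod.ext c h2a
      rw [this]; exact Finset.mem_insert_self _ _
    · rw [c] at hsum hle
      have h2b : p.2 = b := mod_add_unique (j : ℕ) p.2 b (hsum.trans hb.symm)
      rw [h2b] at hle
      have hp1 : min j b = j := min_eq_left (Fin.le_def.mpr hle)
      have hp2 : max j b = b := max_eq_right (Fin.le_def.mpr hle)
      have : p = (min j b, max j b) := by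
        rw [hp1, hp2]; exact Prod.ext c h2b
      rw [this]; exact Finset.mem_insert_of_mem (Finset.mem_singleton_self _)
    · rw [c] at hsum hle
      rw [Nat.add_comm] at hsum
      have h1a : p.1 = a := mod_add_unique (i : ℕ) p.1 a (hsum.trans ha.symm)
      rw [h1a] at hle
      have hp1 : min i a = a := min_eq_right (Fin.le_def.mpr hle)
      have hp2 : max i a = i := max_eq_left (Fin.le_def.mpr hle)
      have : p = (min i a, max i a) := by
        rw [hp1, hp2]; exact Prod.ext h1a c
      rw [this]; exact Finset.mem_insert_self _ _
    · rw [c] at hsum hle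
      rw [Nat.add_comm] at hsum
      have h1b : p.1 = b := mod_add_unique (j : ℕ) p.1 b (hsum.trans hb.symm)
      rw [h1b] at hle
      have hp1 : min j b = b := min_eq_right (Fin.le_def.mpr hle)
      have hp2 : max j b = j := max_eq_left (Fin.le_def.mpr hle)
      have : p = (min j b, max j b) := by
        rw [hp1, hp2]; exact Prod.ext h1b c
      rw [this]; exact Finset.mem_insert_of_mem (Finset.mem_singleton_self _)
  have hne : (min i a, max i a) ≠ (min j b, max j b) := by
    intro hpq
    rw [Prod.ext_iff] at hpq
    rcases pair_eq_cases i a j b hpq.2 hpq.1 with ⟨u, _⟩ | ⟨_, v⟩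
    · exact hij u
    · exact haj v
  rw [sum_filter_subset_support _ _ ({(min i a, max i a), (min j b, max j b)} :
      Finset (Fin n × Fin n)) (by
    intro p hp hps
    by_cases c1 : p.1 = i
    · exact absurd (hin p hp (Or.inl c1)) hps
    by_cases c2 : p.1 = j
    · exact absurd (hin p hp (Or.inr (Or.inl c2))) hps
    by_cases c3 : p.2 = i
    · exact absurd (hin p hp (Or.inr (Or.inr (Or.inl c3)))) hps
    by_cases c4 : p.2 = j
    · exact absurd (hin p hp (Or.inr (Or.inr (Or.inr c4)))) hps
    · exact h0 _ _ c1 c2 c3 c4)] at e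
  rw [sum_filter_pair' _ _ _ _ hne] at e
  have hPi : ((((min i a, max i a) : Fin n × Fin n).1 : ℕ) ≤ (((min i a, max i a) :
        Fin n × Fin n).2 : ℕ) ∧ (((min i a, max i a) : Fin n × Fin n).1 : ℕ) < n - 1 ∧
        (((min i a, max i a) : Fin n × Fin n).2 : ℕ) < n - 1 ∧
        ((((min i a, max i a) : Fin n × Fin n).1 : ℕ) +
          (((min i a, max i a) : Fin n × Fin n).2 : ℕ)) % n = m)
      ↔ ((i : ℕ) ≠ n - 1 ∧ (a : ℕ) ≠ n - 1) := by
    simp only [fin_max_coe, fin_min_coe]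
    have hi := i.isLt
    have ha' := a.isLt
    constructor
    · rintro ⟨_, x1, x2, _⟩; omega
    · rintro ⟨x1, x2⟩
      refine ⟨by omega, by omega, by omega, ?_⟩
      rw [show min (i : ℕ) (a : ℕ) + max (i : ℕ) (a : ℕ) = (i : ℕ) + (a : ℕ) by omega]
      exact ha
  have hPj : ((((min j b, max j b) : Fin n × Fin n).1 : ℕ) ≤ (((min j b, max j b) :
        Fin n × Fin n).2 : ℕ) ∧ (((min j b, max j b) : Fin n × Fin n).1 : ℕ) < n - 1 ∧
        (((min j b, max j b) : Fin n × Fin n).2 : ℕ) < n - 1 ∧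
        ((((min j b, max j b) : Fin n × Fin n).1 : ℕ) +
          (((min j b, max j b) : Fin n × Fin n).2 : ℕ)) % n = m)
      ↔ ((j : ℕ) ≠ n - 1 ∧ (b : ℕ) ≠ n - 1) := by
    simp only [fin_max_coe, fin_min_coe]
    have hj := j.isLt
    have hb' := b.isLt
    constructor
    · rintro ⟨_, x1, x2, _⟩; omega
    · rintro ⟨x1, x2⟩
      refine ⟨by omega, by omega, by omega, ?_⟩
      rw [show min (j : ℕ) (b : ℕ) + max (j : ℕ) (b : ℕ) = (j : ℕ) + (b : ℕ) by omega]
      exact hb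
  by_cases hc1 : (i : ℕ) ≠ n - 1 ∧ (a : ℕ) ≠ n - 1 <;>
    by_cases hc2 : (j : ℕ) ≠ n - 1 ∧ (b : ℕ) ≠ n - 1
  · rw [if_pos (hPi.mpr hc1), if_pos (hPj.mpr hc2)] at e
    rw [if_pos hc1, if_pos hc2]; exact e
  · rw [if_pos (hPi.mpr hc1), if_neg (fun hh => hc2 (hPj.mp hh))] at e
    rw [if_pos hc1, if_neg hc2]; exact e
  · rw [if_neg (fun hh => hc1 (hPi.mp hh)), if_pos (hPj.mpr hc2)] at e
    rw [if_neg hc1, if_pos hc2]; exact e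
  · rw [if_neg (fun hh => hc1 (hPi.mp hh)), if_neg (fun hh => hc2 (hPj.mp hh))] at e
    rw [if_neg hc1, if_neg hc2]; exact e

lemma diag_eval_upper_diag
    (cd : ∀ m : ℕ, m < n → (∑ p ∈ Finset.univ.filter (fun p : Fin n × Fin n =>
          (p.1 : ℕ) ≤ (p.2 : ℕ) ∧ (p.1 : ℕ) < n - 1 ∧ (p.2 : ℕ) < n - 1 ∧
            ((p.1 : ℕ) + (p.2 : ℕ)) % n = m), D p.1 p.2)
        + D ⟨n - 2, by omega⟩ ⟨n - 1, by omega⟩ = 0) :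
    (if (i : ℕ) ≠ n - 1 ∧ (j : ℕ) ≠ n - 1 then D (min i j) (max i j) else 0)
      + D ⟨n - 2, by omega⟩ ⟨n - 1, by omega⟩ = 0 := by
  have ha : ((i : ℕ) + (j : ℕ)) % n = ((i : ℕ) + (j : ℕ)) % n := rfl
  have hb : ((j : ℕ) + (i : ℕ)) % n = ((i : ℕ) + (j : ℕ)) % n := by rw [Nat.add_comm]
  have e := cd (((i : ℕ) + (j : ℕ)) % n) (Nat.mod_lt _ (by omega))
  have hin : ∀ p : Fin n × Fin n,
      ((p.1 : ℕ) ≤ (p.2 : ℕ) ∧ (p.1 : ℕ) < n - 1 ∧ (p.2 : ℕ) < n - 1 ∧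
        ((p.1 : ℕ) + (p.2 : ℕ)) % n = ((i : ℕ) + (j : ℕ)) % n) →
      (p.1 = i ∨ p.1 = j ∨ p.2 = i ∨ p.2 = j) →
      p ∈ ({(min i j, max i j)} : Finset (Fin n × Fin n)) := by
    rintro p ⟨hle, _, _, hsum⟩ hc
    rw [Finset.mem_singleton]
    rcases hc with c | c | c | c
    · rw [c] at hsum hle
      have h2 : p.2 = j := mod_add_unique (i : ℕ) p.2 j (hsum.trans ha.symm)
      rw [h2] at hle
      rw [min_eq_left (Fin.le_def.mpr hle), max_eq_right (Fin.le_def.mpr hle)]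
      exact Prod.ext c h2
    · rw [c] at hsum hle
      have h2 : p.2 = i := mod_add_unique (j : ℕ) p.2 i (hsum.trans hb.symm)
      rw [h2] at hle
      rw [min_eq_right (Fin.le_def.mpr hle), max_eq_left (Fin.le_def.mpr hle)]
      exact Prod.ext c h2
    · rw [c] at hsum hle
      rw [Nat.add_comm] at hsum
      have h1 : p.1 = j := mod_add_unique (i : ℕ) p.1 j (hsum.trans ha.symm)
      rw [h1] at hle
      rw [min_eq_right (Fin.le_def.mpr hle), max_eq_left (Fin.le_def.mpr hle)]
      exact Prod.ext h1 c
    · rw [c] at hsum hle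
      rw [Nat.add_comm] at hsum
      have h1 : p.1 = i := mod_add_unique (j : ℕ) p.1 i (hsum.trans hb.symm)
      rw [h1] at hle
      rw [min_eq_left (Fin.le_def.mpr hle), max_eq_right (Fin.le_def.mpr hle)]
      exact Prod.ext h1 c
  rw [sum_filter_subset_support _ _ ({(min i j, max i j)} : Finset (Fin n × Fin n)) (by
    intro p hp hps
    by_cases c1 : p.1 = i
    · exact absurd (hin p hp (Or.inl c1)) hps
    by_cases c2 : p.1 = j
    · exact absurd (hin p hp (Or.inr (Or.inl c2))) hps
    by_cases c3 : p.2 = i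
    · exact absurd (hin p hp (Or.inr (Or.inr (Or.inl c3)))) hps
    by_cases c4 : p.2 = j
    · exact absurd (hin p hp (Or.inr (Or.inr (Or.inr c4)))) hps
    · exact h0 _ _ c1 c2 c3 c4)] at e
  rw [sum_filter_single'] at e
  have hPi : ((((min i j, max i j) : Fin n × Fin n).1 : ℕ) ≤ (((min i j, max i j) :
        Fin n × Fin n).2 : ℕ) ∧ (((min i j, max i j) : Fin n × Fin n).1 : ℕ) < n - 1 ∧
        (((min i j, max i j) : Fin n × Fin n).2 : ℕ) < n - 1 ∧
        ((((min i j, max i j) : Fin n × Fin n).1 : ℕ) +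
          (((min i j, max i j) : Fin n × Fin n).2 : ℕ)) % n = ((i : ℕ) + (j : ℕ)) % n)
      ↔ ((i : ℕ) ≠ n - 1 ∧ (j : ℕ) ≠ n - 1) := by
    simp only [fin_max_coe, fin_min_coe]
    have hi := i.isLt
    have hj := j.isLt
    constructor
    · rintro ⟨_, x1, x2, _⟩; omega
    · rintro ⟨x1, x2⟩
      refine ⟨by omega, by omega, by omega, ?_⟩
      rw [show min (i : ℕ) (j : ℕ) + max (i : ℕ) (j : ℕ) = (i : ℕ) + (j : ℕ) by omega]
  by_cases hc1 : (i : ℕ) ≠ n - 1 ∧ (j : ℕ) ≠ n - 1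
  · rw [if_pos (hPi.mpr hc1)] at e
    rw [if_pos hc1]; exact e
  · rw [if_neg (fun hh => hc1 (hPi.mp hh))] at e
    rw [if_neg hc1]; exact e

end DiagEval


set_option maxHeartbeats 1000000 in
/-- The central lemma: a labeling satisfying the four constraint families which is
supported on the cross of two distinct nodes must vanish. -/
theorem key (n : ℕ) (hn : 5 ≤ n) (hp : Nat.Prime n) (i j : Fin n) (hij : i ≠ j)
    (D : Fin n → Fin n → ZMod 2)
    (ca : ∀ h : Fin n, (h : ℕ) < n - 2 →
      ∑ ℓ ∈ Finset.univ.filter (fun ℓ : Fin n => (ℓ : ℕ) < n - 1),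
        D (max h ℓ) (min h ℓ) = 0)
    (cb : ∀ m : ℕ, m < n → (∑ p ∈ Finset.univ.filter (fun p : Fin n × Fin n =>
          (p.2 : ℕ) ≤ (p.1 : ℕ) ∧ (p.1 : ℕ) ≠ n - 2 ∧ (p.2 : ℕ) ≠ n - 2 ∧
            ((p.1 : ℕ) + (p.2 : ℕ)) % n = m), D p.1 p.2)
        + D ⟨n - 1, by omega⟩ ⟨n - 2, by omega⟩ = 0)
    (cc : ∀ h : Fin n, (h : ℕ) < n - 2 →
      ∑ ℓ ∈ Finset.univ.filter (fun ℓ : Fin n => (ℓ : ℕ) ≠ n - 2),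
        D (min h ℓ) (max h ℓ) = 0)
    (cd : ∀ m : ℕ, m < n → (∑ p ∈ Finset.univ.filter (fun p : Fin n × Fin n =>
          (p.1 : ℕ) ≤ (p.2 : ℕ) ∧ (p.1 : ℕ) < n - 1 ∧ (p.2 : ℕ) < n - 1 ∧
            ((p.1 : ℕ) + (p.2 : ℕ)) % n = m), D p.1 p.2)
        + D ⟨n - 2, by omega⟩ ⟨n - 1, by omega⟩ = 0)
    (h0 : ∀ k ℓ : Fin n, k ≠ i → k ≠ j → ℓ ≠ i → ℓ ≠ j → D k ℓ = 0) :
    ∀ k ℓ, D k ℓ = 0 := by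
  haveI : NeZero n := ⟨by omega⟩
  haveI : Fact (Nat.Prime n) := ⟨hp⟩
  -- basic conversion facts
  have hι_inj : ∀ a b : Fin n, ((a : ℕ) : ZMod n) = ((b : ℕ) : ZMod n) → a = b := by
    intro a b h
    have h2 := congrArg ZMod.val h
    rw [ZMod.val_cast_of_lt a.isLt, ZMod.val_cast_of_lt b.isLt] at h2
    exact Fin.ext h2
  have hκval : ∀ z : ZMod n, (((⟨z.val, ZMod.val_lt z⟩ : Fin n) : ℕ) : ZMod n) = z := by
    intro z
    show ((z.val : ℕ) : ZMod n) = z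
    rw [ZMod.natCast_val, ZMod.cast_id]
  have hκeq : ∀ x : Fin n, (⟨(((x : ℕ) : ZMod n)).val, ZMod.val_lt _⟩ : Fin n) = x :=
    fun x => Fin.ext (ZMod.val_cast_of_lt x.isLt)
  have hc2 : ((n - 2 : ℕ) : ZMod n) = -2 := by
    rw [Nat.cast_sub (by omega : 2 ≤ n), ZMod.natCast_self]
    push_cast; ring
  have hc1 : ((n - 1 : ℕ) : ZMod n) = -1 := by
    rw [Nat.cast_sub (by omega : 1 ≤ n), ZMod.natCast_self]
    push_cast; ring
  have hval2 : ∀ x : Fin n, (((x : ℕ) : ZMod n) = -2) ↔ ((x : ℕ) = n - 2) := by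
    intro x
    constructor
    · intro h
      have h2 : ((x : ℕ) : ZMod n) = ((n - 2 : ℕ) : ZMod n) := by rw [hc2]; exact h
      have h3 := hι_inj x ⟨n - 2, by omega⟩ h2
      exact congrArg Fin.val h3
    · intro h
      rw [show ((x : ℕ) : ZMod n) = ((n - 2 : ℕ) : ZMod n) by rw [h], hc2]
  have hval1 : ∀ x : Fin n, (((x : ℕ) : ZMod n) = -1) ↔ ((x : ℕ) = n - 1) := by
    intro x
    constructor
    · intro h
      have h2 : ((x : ℕ) : ZMod n) = ((n - 1 : ℕ) : ZMod n) := by rw [hc1]; exact h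
      have h3 := hι_inj x ⟨n - 1, by omega⟩ h2
      exact congrArg Fin.val h3
    · intro h
      rw [show ((x : ℕ) : ZMod n) = ((n - 1 : ℕ) : ZMod n) by rw [h], hc1]
  have hbridge : ∀ (x y : Fin n) (m : ℕ), m < n →
      (((x : ℕ) + (y : ℕ)) % n = m ↔ ((x : ℕ) : ZMod n) + ((y : ℕ) : ZMod n) = (m : ZMod n)) := by
    intro x y m hm
    constructor
    · intro h
      have h2 : (((x : ℕ) + (y : ℕ) : ℕ) : ZMod n) = ((m : ℕ) : ZMod n) := by
        rw [← ZMod.natCast_mod, h]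
      push_cast at h2
      exact h2
    · intro h
      have h2 : ((((x : ℕ) + (y : ℕ)) % n : ℕ) : ZMod n) = ((m : ℕ) : ZMod n) := by
        rw [ZMod.natCast_mod]
        push_cast
        exact h
      have h3 := congrArg ZMod.val h2
      rwa [ZMod.val_cast_of_lt (Nat.mod_lt _ (by omega)), ZMod.val_cast_of_lt hm] at h3
  have hDm : ∀ a b : Fin n, a ≠ i → a ≠ j → b ≠ i → b ≠ j → D (max a b) (min a b) = 0 := by
    intro a b h1 h2 h3 h4
    rcases max_choice a b with h | h <;> rcases min_choice a b with g | g <;> rw [h, g]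
    · exact h0 _ _ h1 h2 h1 h2
    · exact h0 _ _ h1 h2 h3 h4
    · exact h0 _ _ h3 h4 h1 h2
    · exact h0 _ _ h3 h4 h3 h4
  have hDm' : ∀ a b : Fin n, a ≠ i → a ≠ j → b ≠ i → b ≠ j → D (min a b) (max a b) = 0 := by
    intro a b h1 h2 h3 h4
    rcases max_choice a b with h | h <;> rcases min_choice a b with g | g <;> rw [h, g]
    · exact h0 _ _ h1 h2 h1 h2
    · exact h0 _ _ h3 h4 h1 h2
    · exact h0 _ _ h1 h2 h3 h4
    · exact h0 _ _ h3 h4 h3 h4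
  -- construct the environment
  have hIJz : ((i : ℕ) : ZMod n) ≠ ((j : ℕ) : ZMod n) := fun h => hij (hι_inj _ _ h)
  have hccz : (-2 : ZMod n) ≠ -1 := by
    intro h
    have h1 : ((1 : ℕ) : ZMod n) = 0 := by push_cast; linear_combination -h
    rw [CharP.cast_eq_zero_iff (ZMod n) n] at h1
    have := Nat.le_of_dvd one_pos h1
    omega
  have hneg2val : (-2 : ZMod n).val = n - 2 := by
    rw [← hc2, ZMod.val_cast_of_lt (by omega)]
  have hneg1val : (-1 : ZMod n).val = n - 1 := by
    rw [← hc1, ZMod.val_cast_of_lt (by omega)]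
  have hvx2 : ∀ z : ZMod n, z = -2 ↔ z.val = n - 2 := by
    intro z
    constructor
    · intro h; rw [h, hneg2val]
    · intro h
      calc z = ((z.val : ℕ) : ZMod n) := (hκval z).symm
        _ = ((n - 2 : ℕ) : ZMod n) := by rw [h]
        _ = -2 := hc2
  have hvx1 : ∀ z : ZMod n, z = -1 ↔ z.val = n - 1 := by
    intro z
    constructor
    · intro h; rw [h, hneg1val]
    · intro h
      calc z = ((z.val : ℕ) : ZMod n) := (hκval z).symm
        _ = ((n - 1 : ℕ) : ZMod n) := by rw [h]
        _ = -1 := hc1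
  have hiff1 : ∀ x : Fin n, ((x : ℕ) < n - 1) ↔ (((x : ℕ) : ZMod n) ≠ -1) := by
    intro x
    constructor
    · intro hx he; have := (hval1 x).mp he; omega
    · intro hx; have hilt := x.isLt; by_contra hcon; exact hx ((hval1 x).mpr (by omega))
  have hiff2 : ∀ x : Fin n, ((x : ℕ) ≠ n - 2) ↔ (((x : ℕ) : ZMod n) ≠ -2) :=
    fun x => (not_congr (hval2 x)).symm
  have hiff1' : ∀ x : Fin n, ((x : ℕ) ≠ n - 1) ↔ (((x : ℕ) : ZMod n) ≠ -1) :=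
    fun x => (not_congr (hval1 x)).symm
  have hzero := Env.allZero (n := n) hn
    { I := ((i : ℕ) : ZMod n)
      J := ((j : ℕ) : ZMod n)
      c := (-2 : ZMod n)
      c' := (-1 : ZMod n)
      P := fun t => D (max i ⟨t.val, ZMod.val_lt t⟩) (min i ⟨t.val, ZMod.val_lt t⟩)
      Q := fun t => D (max j ⟨t.val, ZMod.val_lt t⟩) (min j ⟨t.val, ZMod.val_lt t⟩)
      P' := fun t => D (min i ⟨t.val, ZMod.val_lt t⟩) (max i ⟨t.val, ZMod.val_lt t⟩)
      Q' := fun t => D (min j ⟨t.val, ZMod.val_lt t⟩) (max j ⟨t.val, ZMod.val_lt t⟩)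
      W := D ⟨n - 1, by omega⟩ ⟨n - 2, by omega⟩
      W' := D ⟨n - 2, by omega⟩ ⟨n - 1, by omega⟩
      hIJ := hIJz
      hcc := hccz
      e1 := by
        intro h hI hJ hcm2 hcm1
        have hfi : (⟨h.val, ZMod.val_lt h⟩ : Fin n) ≠ i := fun e => hI (by rw [← hκval h, e])
        have hfj : (⟨h.val, ZMod.val_lt h⟩ : Fin n) ≠ j := fun e => hJ (by rw [← hκval h, e])
        have hfv2 : h.val ≠ n - 2 := fun e => hcm2 ((hvx2 h).mpr e)
        have hfv1 : h.val ≠ n - 1 := fun e => hcm1 ((hvx1 h).mpr e)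
        have hlt : ((⟨h.val, ZMod.val_lt h⟩ : Fin n) : ℕ) < n - 2 := by
          have := ZMod.val_lt h; show h.val < n - 2; omega
        have e := ca ⟨h.val, ZMod.val_lt h⟩ hlt
        rw [sum_filter_subset_support _ _ ({i, j} : Finset (Fin n)) (by
          intro ℓ _ hℓ
          simp only [Finset.mem_insert, Finset.mem_singleton] at hℓ
          push_neg at hℓ
          exact hDm _ _ hfi hfj hℓ.1 hℓ.2)] at e
        rw [sum_filter_pair' _ _ _ _ hij] at e
        rw [max_comm _ i, min_comm _ i, max_comm _ j, min_comm _ j] at e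
        by_cases b1 : ((i : ℕ) : ZMod n) ≠ -1 <;> by_cases b2 : ((j : ℕ) : ZMod n) ≠ -1
        · rw [if_pos ((hiff1 i).mpr b1), if_pos ((hiff1 j).mpr b2)] at e
          rw [if_pos b1, if_pos b2]; exact e
        · rw [if_pos ((hiff1 i).mpr b1), if_neg (fun hh => b2 ((hiff1 j).mp hh))] at e
          rw [if_pos b1, if_neg b2]; exact e
        · rw [if_neg (fun hh => b1 ((hiff1 i).mp hh)), if_pos ((hiff1 j).mpr b2)] at e
          rw [if_neg b1, if_pos b2]; exact e
        · rw [if_neg (fun hh => b1 ((hiff1 i).mp hh)), if_neg (fun hh => b2 ((hiff1 j).mp hh))]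
            at e
          rw [if_neg b1, if_neg b2]; exact e
      e1' := by
        intro h hI hJ hcm2 hcm1
        have hfi : (⟨h.val, ZMod.val_lt h⟩ : Fin n) ≠ i := fun e => hI (by rw [← hκval h, e])
        have hfj : (⟨h.val, ZMod.val_lt h⟩ : Fin n) ≠ j := fun e => hJ (by rw [← hκval h, e])
        have hfv2 : h.val ≠ n - 2 := fun e => hcm2 ((hvx2 h).mpr e)
        have hfv1 : h.val ≠ n - 1 := fun e => hcm1 ((hvx1 h).mpr e)
        have hlt : ((⟨h.val, ZMod.val_lt h⟩ : Fin n) : ℕ) < n - 2 := by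
          have := ZMod.val_lt h; show h.val < n - 2; omega
        have e := cc ⟨h.val, ZMod.val_lt h⟩ hlt
        rw [sum_filter_subset_support _ _ ({i, j} : Finset (Fin n)) (by
          intro ℓ _ hℓ
          simp only [Finset.mem_insert, Finset.mem_singleton] at hℓ
          push_neg at hℓ
          exact hDm' _ _ hfi hfj hℓ.1 hℓ.2)] at e
        rw [sum_filter_pair' _ _ _ _ hij] at e
        rw [max_comm _ i, min_comm _ i, max_comm _ j, min_comm _ j] at e
        by_cases b1 : ((i : ℕ) : ZMod n) ≠ -2 <;> by_cases b2 : ((j : ℕ) : ZMod n) ≠ -2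
        · rw [if_pos ((hiff2 i).mpr b1), if_pos ((hiff2 j).mpr b2)] at e
          rw [if_pos b1, if_pos b2]; exact e
        · rw [if_pos ((hiff2 i).mpr b1), if_neg (fun hh => b2 ((hiff2 j).mp hh))] at e
          rw [if_pos b1, if_neg b2]; exact e
        · rw [if_neg (fun hh => b1 ((hiff2 i).mp hh)), if_pos ((hiff2 j).mpr b2)] at e
          rw [if_neg b1, if_pos b2]; exact e
        · rw [if_neg (fun hh => b1 ((hiff2 i).mp hh)), if_neg (fun hh => b2 ((hiff2 j).mp hh))]
            at e
          rw [if_neg b1, if_neg b2]; exact e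
      e2 := by
        intro hi2 hi1
        have hv2 : (i : ℕ) ≠ n - 2 := fun e => hi2 ((hval2 i).mpr e)
        have hv1 : (i : ℕ) ≠ n - 1 := fun e => hi1 ((hval1 i).mpr e)
        have hilt := i.isLt
        have e := ca i (by omega)
        rw [← e]
        symm
        apply Finset.sum_nbij' (fun ℓ : Fin n => ((ℓ : ℕ) : ZMod n))
          (fun t : ZMod n => (⟨t.val, ZMod.val_lt t⟩ : Fin n))
        · intro a ha
          simp only [Finset.mem_filter, Finset.mem_univ, true_and] at ha
          exact Finset.mem_erase.mpr ⟨fun e => by have := (hval1 a).mp e; omega,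
            Finset.mem_univ _⟩
        · intro t ht
          simp only [Finset.mem_filter, Finset.mem_univ, true_and]
          have h1 : t ≠ -1 := (Finset.mem_erase.mp ht).1
          have h2 : t.val ≠ n - 1 := fun e => h1 ((hvx1 t).mpr e)
          have := ZMod.val_lt t
          show t.val < n - 1
          omega
        · intro a _; exact hκeq a
        · intro t _; exact hκval t
        · intro a _; rw [hκeq a]
      e2q := by
        intro hj2 hj1
        have hv2 : (j : ℕ) ≠ n - 2 := fun e => hj2 ((hval2 j).mpr e)
        have hv1 : (j : ℕ) ≠ n - 1 := fun e => hj1 ((hval1 j).mpr e)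
        have hjlt := j.isLt
        have e := ca j (by omega)
        rw [← e]
        symm
        apply Finset.sum_nbij' (fun ℓ : Fin n => ((ℓ : ℕ) : ZMod n))
          (fun t : ZMod n => (⟨t.val, ZMod.val_lt t⟩ : Fin n))
        · intro a ha
          simp only [Finset.mem_filter, Finset.mem_univ, true_and] at ha
          exact Finset.mem_erase.mpr ⟨fun e => by have := (hval1 a).mp e; omega,
            Finset.mem_univ _⟩
        · intro t ht
          simp only [Finset.mem_filter, Finset.mem_univ, true_and]
          have h1 : t ≠ -1 := (Finset.mem_erase.mp ht).1
          have h2 : t.val ≠ n - 1 := fun e => h1 ((hvx1 t).mpr e)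
          have := ZMod.val_lt t
          show t.val < n - 1
          omega
        · intro a _; exact hκeq a
        · intro t _; exact hκval t
        · intro a _; rw [hκeq a]
      e2' := by
        intro hi2 hi1
        have hv2 : (i : ℕ) ≠ n - 2 := fun e => hi2 ((hval2 i).mpr e)
        have hv1 : (i : ℕ) ≠ n - 1 := fun e => hi1 ((hval1 i).mpr e)
        have hilt := i.isLt
        have e := cc i (by omega)
        rw [← e]
        symm
        apply Finset.sum_nbij' (fun ℓ : Fin n => ((ℓ : ℕ) : ZMod n))
          (fun t : ZMod n => (⟨t.val, ZMod.val_lt t⟩ : Fin n))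
        · intro a ha
          simp only [Finset.mem_filter, Finset.mem_univ, true_and] at ha
          exact Finset.mem_erase.mpr ⟨fun e => ha ((hval2 a).mp e), Finset.mem_univ _⟩
        · intro t ht
          simp only [Finset.mem_filter, Finset.mem_univ, true_and]
          have h1 : t ≠ -2 := (Finset.mem_erase.mp ht).1
          exact fun e => h1 ((hvx2 t).mpr e)
        · intro a _; exact hκeq a
        · intro t _; exact hκval t
        · intro a _; rw [hκeq a]
      e2q' := by
        intro hj2 hj1
        have hv2 : (j : ℕ) ≠ n - 2 := fun e => hj2 ((hval2 j).mpr e)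
        have hv1 : (j : ℕ) ≠ n - 1 := fun e => hj1 ((hval1 j).mpr e)
        have hjlt := j.isLt
        have e := cc j (by omega)
        rw [← e]
        symm
        apply Finset.sum_nbij' (fun ℓ : Fin n => ((ℓ : ℕ) : ZMod n))
          (fun t : ZMod n => (⟨t.val, ZMod.val_lt t⟩ : Fin n))
        · intro a ha
          simp only [Finset.mem_filter, Finset.mem_univ, true_and] at ha
          exact Finset.mem_erase.mpr ⟨fun e => ha ((hval2 a).mp e), Finset.mem_univ _⟩
        · intro t ht
          simp only [Finset.mem_filter, Finset.mem_univ, true_and]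
          have h1 : t ≠ -2 := (Finset.mem_erase.mp ht).1
          exact fun e => h1 ((hvx2 t).mpr e)
        · intro a _; exact hκeq a
        · intro t _; exact hκval t
        · intro a _; rw [hκeq a]
      e3 := by
        intro a haJ
        have hmlt : ((i : ℕ) + ((⟨a.val, ZMod.val_lt a⟩ : Fin n) : ℕ)) % n < n :=
          Nat.mod_lt _ (by omega)
        have hMa : ((i : ℕ) : ZMod n) + ((((⟨a.val, ZMod.val_lt a⟩ : Fin n)) : ℕ) : ZMod n)
            = ((((i : ℕ) + ((⟨a.val, ZMod.val_lt a⟩ : Fin n) : ℕ)) % n : ℕ) : ZMod n) :=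
          (hbridge i ⟨a.val, ZMod.val_lt a⟩ _ hmlt).mp rfl
        rw [hκval] at hMa
        set bz : ZMod n := a - (((j : ℕ) : ZMod n) - ((i : ℕ) : ZMod n)) with hbzdef
        have hb : ((j : ℕ) + ((⟨bz.val, ZMod.val_lt bz⟩ : Fin n) : ℕ)) % n
            = ((i : ℕ) + ((⟨a.val, ZMod.val_lt a⟩ : Fin n) : ℕ)) % n := by
          rw [hbridge j ⟨bz.val, ZMod.val_lt bz⟩ _ hmlt, hκval, ← hMa, hbzdef]
          ring
        have hajf : (⟨a.val, ZMod.val_lt a⟩ : Fin n) ≠ j := fun e => haJ (by rw [← hκval a, e])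
        have e := diag_eval_lower hn i j hij D h0 cb _ hmlt ⟨a.val, ZMod.val_lt a⟩
          ⟨bz.val, ZMod.val_lt bz⟩ rfl hb hajf
        have hca : ((⟨a.val, ZMod.val_lt a⟩ : Fin n) : ℕ) ≠ n - 2 ↔ a ≠ -2 :=
          (not_congr (hvx2 a)).symm
        have hcb : ((⟨bz.val, ZMod.val_lt bz⟩ : Fin n) : ℕ) ≠ n - 2 ↔ bz ≠ -2 :=
          (not_congr (hvx2 bz)).symm
        by_cases b1 : ((i : ℕ) : ZMod n) ≠ -2 ∧ a ≠ -2 <;>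
          by_cases b2 : ((j : ℕ) : ZMod n) ≠ -2 ∧ bz ≠ -2
        · rw [if_pos ⟨(hiff2 i).mpr b1.1, hca.mpr b1.2⟩,
            if_pos ⟨(hiff2 j).mpr b2.1, hcb.mpr b2.2⟩] at e
          rw [if_pos b1, if_pos b2]; exact e
        · rw [if_pos ⟨(hiff2 i).mpr b1.1, hca.mpr b1.2⟩,
            if_neg (fun hh => b2 ⟨(hiff2 j).mp hh.1, hcb.mp hh.2⟩)] at e
          rw [if_pos b1, if_neg b2]; exact e
        · rw [if_neg (fun hh => b1 ⟨(hiff2 i).mp hh.1, hca.mp hh.2⟩),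
            if_pos ⟨(hiff2 j).mpr b2.1, hcb.mpr b2.2⟩] at e
          rw [if_neg b1, if_pos b2]; exact e
        · rw [if_neg (fun hh => b1 ⟨(hiff2 i).mp hh.1, hca.mp hh.2⟩),
            if_neg (fun hh => b2 ⟨(hiff2 j).mp hh.1, hcb.mp hh.2⟩)] at e
          rw [if_neg b1, if_neg b2]; exact e
      e3d := by
        have e := diag_eval_lower_diag hn i j hij D h0 cb
        simp only [hκeq i, max_comm j i, min_comm j i]
        by_cases b1 : ((i : ℕ) : ZMod n) ≠ -2 ∧ ((j : ℕ) : ZMod n) ≠ -2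
        · rw [if_pos ⟨(hiff2 i).mpr b1.1, (hiff2 j).mpr b1.2⟩] at e
          rw [if_pos b1]; exact e
        · rw [if_neg (fun hh => b1 ⟨(hiff2 i).mp hh.1, (hiff2 j).mp hh.2⟩)] at e
          rw [if_neg b1]; exact e
      e3' := by
        intro a haJ
        have hmlt : ((i : ℕ) + ((⟨a.val, ZMod.val_lt a⟩ : Fin n) : ℕ)) % n < n :=
          Nat.mod_lt _ (by omega)
        have hMa : ((i : ℕ) : ZMod n) + ((((⟨a.val, ZMod.val_lt a⟩ : Fin n)) : ℕ) : ZMod n)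
            = ((((i : ℕ) + ((⟨a.val, ZMod.val_lt a⟩ : Fin n) : ℕ)) % n : ℕ) : ZMod n) :=
          (hbridge i ⟨a.val, ZMod.val_lt a⟩ _ hmlt).mp rfl
        rw [hκval] at hMa
        set bz : ZMod n := a - (((j : ℕ) : ZMod n) - ((i : ℕ) : ZMod n)) with hbzdef
        have hb : ((j : ℕ) + ((⟨bz.val, ZMod.val_lt bz⟩ : Fin n) : ℕ)) % n
            = ((i : ℕ) + ((⟨a.val, ZMod.val_lt a⟩ : Fin n) : ℕ)) % n := by
          rw [hbridge j ⟨bz.val, ZMod.val_lt bz⟩ _ hmlt, hκval, ← hMa, hbzdef]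
          ring
        have hajf : (⟨a.val, ZMod.val_lt a⟩ : Fin n) ≠ j := fun e => haJ (by rw [← hκval a, e])
        have e := diag_eval_upper hn i j hij D h0 cd _ hmlt ⟨a.val, ZMod.val_lt a⟩
          ⟨bz.val, ZMod.val_lt bz⟩ rfl hb hajf
        have hca : ((⟨a.val, ZMod.val_lt a⟩ : Fin n) : ℕ) ≠ n - 1 ↔ a ≠ -1 :=
          (not_congr (hvx1 a)).symm
        have hcb : ((⟨bz.val, ZMod.val_lt bz⟩ : Fin n) : ℕ) ≠ n - 1 ↔ bz ≠ -1 :=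
          (not_congr (hvx1 bz)).symm
        by_cases b1 : ((i : ℕ) : ZMod n) ≠ -1 ∧ a ≠ -1 <;>
          by_cases b2 : ((j : ℕ) : ZMod n) ≠ -1 ∧ bz ≠ -1
        · rw [if_pos ⟨(hiff1' i).mpr b1.1, hca.mpr b1.2⟩,
            if_pos ⟨(hiff1' j).mpr b2.1, hcb.mpr b2.2⟩] at e
          rw [if_pos b1, if_pos b2]; exact e
        · rw [if_pos ⟨(hiff1' i).mpr b1.1, hca.mpr b1.2⟩,
            if_neg (fun hh => b2 ⟨(hiff1' j).mp hh.1, hcb.mp hh.2⟩)] at e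
          rw [if_pos b1, if_neg b2]; exact e
        · rw [if_neg (fun hh => b1 ⟨(hiff1' i).mp hh.1, hca.mp hh.2⟩),
            if_pos ⟨(hiff1' j).mpr b2.1, hcb.mpr b2.2⟩] at e
          rw [if_neg b1, if_pos b2]; exact e
        · rw [if_neg (fun hh => b1 ⟨(hiff1' i).mp hh.1, hca.mp hh.2⟩),
            if_neg (fun hh => b2 ⟨(hiff1' j).mp hh.1, hcb.mp hh.2⟩)] at e
          rw [if_neg b1, if_neg b2]; exact e
      e3d' := by
        have e := diag_eval_upper_diag hn i j hij D h0 cd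
        simp only [hκeq i, max_comm j i, min_comm j i]
        by_cases b1 : ((i : ℕ) : ZMod n) ≠ -1 ∧ ((j : ℕ) : ZMod n) ≠ -1
        · rw [if_pos ⟨(hiff1' i).mpr b1.1, (hiff1' j).mpr b1.2⟩] at e
          rw [if_pos b1]; exact e
        · rw [if_neg (fun hh => b1 ⟨(hiff1' i).mp hh.1, (hiff1' j).mp hh.2⟩)] at e
          rw [if_neg b1]; exact e
      l1 := by simp only [hκeq i, max_self, min_self]
      l2 := by simp only [hκeq j, max_self, min_self]
      l3 := by simp only [hκeq i, hκeq j, max_comm i j, min_comm i j]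
      l3' := by simp only [hκeq i, hκeq j, max_comm i j, min_comm i j]
      hW0 := by
        intro h1 h2 h3 h4
        have hi2 : (i : ℕ) ≠ n - 2 := fun e => h1 ((hval2 i).mpr e)
        have hi1 : (i : ℕ) ≠ n - 1 := fun e => h2 ((hval1 i).mpr e)
        have hj2 : (j : ℕ) ≠ n - 2 := fun e => h3 ((hval2 j).mpr e)
        have hj1 : (j : ℕ) ≠ n - 1 := fun e => h4 ((hval1 j).mpr e)
        have a1 : (⟨n - 1, by omega⟩ : Fin n) ≠ i := fun e => hi1 (congrArg Fin.val e).symm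
        have a2 : (⟨n - 1, by omega⟩ : Fin n) ≠ j := fun e => hj1 (congrArg Fin.val e).symm
        have a3 : (⟨n - 2, by omega⟩ : Fin n) ≠ i := fun e => hi2 (congrArg Fin.val e).symm
        have a4 : (⟨n - 2, by omega⟩ : Fin n) ≠ j := fun e => hj2 (congrArg Fin.val e).symm
        exact ⟨h0 _ _ a1 a2 a3 a4, h0 _ _ a3 a4 a1 a2⟩
      hWJc := by
        intro hj2
        have hjf : j = ⟨n - 2, by omega⟩ := Fin.ext ((hval2 j).mp hj2)
        have hm1fin : (⟨(-1 : ZMod n).val, ZMod.val_lt _⟩ : Fin n) = ⟨n - 1, by omega⟩ :=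
          Fin.ext hneg1val
        constructor
        · simp only [hm1fin, hjf, max_eq_right (Fin.mk_le_mk.mpr (by omega : n - 2 ≤ n - 1)),
            min_eq_left (Fin.mk_le_mk.mpr (by omega : n - 2 ≤ n - 1))]
        · simp only [hm1fin, hjf, max_eq_right (Fin.mk_le_mk.mpr (by omega : n - 2 ≤ n - 1)),
            min_eq_left (Fin.mk_le_mk.mpr (by omega : n - 2 ≤ n - 1))]
      hWJc' := by
        intro hj1
        have hjf : j = ⟨n - 1, by omega⟩ := Fin.ext ((hval1 j).mp hj1)
        have hm2fin : (⟨(-2 : ZMod n).val, ZMod.val_lt _⟩ : Fin n) = ⟨n - 2, by omega⟩ :=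
          Fin.ext hneg2val
        constructor
        · simp only [hm2fin, hjf, max_eq_left (Fin.mk_le_mk.mpr (by omega : n - 2 ≤ n - 1)),
            min_eq_right (Fin.mk_le_mk.mpr (by omega : n - 2 ≤ n - 1))]
        · simp only [hm2fin, hjf, max_eq_left (Fin.mk_le_mk.mpr (by omega : n - 2 ≤ n - 1)),
            min_eq_right (Fin.mk_le_mk.mpr (by omega : n - 2 ≤ n - 1))]
      hWIc := by
        intro hi2
        have hif : i = ⟨n - 2, by omega⟩ := Fin.ext ((hval2 i).mp hi2)
        have hm1fin : (⟨(-1 : ZMod n).val, ZMod.val_lt _⟩ : Fin n) = ⟨n - 1, by omega⟩ :=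
          Fin.ext hneg1val
        constructor
        · simp only [hm1fin, hif, max_eq_right (Fin.mk_le_mk.mpr (by omega : n - 2 ≤ n - 1)),
            min_eq_left (Fin.mk_le_mk.mpr (by omega : n - 2 ≤ n - 1))]
        · simp only [hm1fin, hif, max_eq_right (Fin.mk_le_mk.mpr (by omega : n - 2 ≤ n - 1)),
            min_eq_left (Fin.mk_le_mk.mpr (by omega : n - 2 ≤ n - 1))]
      hWIc' := by
        intro hi1
        have hif : i = ⟨n - 1, by omega⟩ := Fin.ext ((hval1 i).mp hi1)
        have hm2fin : (⟨(-2 : ZMod n).val, ZMod.val_lt _⟩ : Fin n) = ⟨n - 2, by omega⟩ :=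
          Fin.ext hneg2val
        constructor
        · simp only [hm2fin, hif, max_eq_left (Fin.mk_le_mk.mpr (by omega : n - 2 ≤ n - 1)),
            min_eq_right (Fin.mk_le_mk.mpr (by omega : n - 2 ≤ n - 1))]
        · simp only [hm2fin, hif, max_eq_left (Fin.mk_le_mk.mpr (by omega : n - 2 ≤ n - 1)),
            min_eq_right (Fin.mk_le_mk.mpr (by omega : n - 2 ≤ n - 1))] }
  have hzP : ∀ t : ZMod n,
      D (max i ⟨t.val, ZMod.val_lt t⟩) (min i ⟨t.val, ZMod.val_lt t⟩) = 0 :=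
    fun t => (hzero t).1
  have hzQ : ∀ t : ZMod n,
      D (max j ⟨t.val, ZMod.val_lt t⟩) (min j ⟨t.val, ZMod.val_lt t⟩) = 0 :=
    fun t => (hzero t).2.1
  have hzP' : ∀ t : ZMod n,
      D (min i ⟨t.val, ZMod.val_lt t⟩) (max i ⟨t.val, ZMod.val_lt t⟩) = 0 :=
    fun t => (hzero t).2.2.1
  have hzQ' : ∀ t : ZMod n,
      D (min j ⟨t.val, ZMod.val_lt t⟩) (max j ⟨t.val, ZMod.val_lt t⟩) = 0 :=
    fun t => (hzero t).2.2.2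
  -- conclude
  intro k ℓ
  by_cases hki : k = i
  · subst hki
    rcases le_total ℓ k with h | h
    · have hz := hzP ((ℓ : ℕ) : ZMod n)
      rw [hκeq ℓ, max_eq_left h, min_eq_right h] at hz
      exact hz
    · have hz := hzP' ((ℓ : ℕ) : ZMod n)
      rw [hκeq ℓ, min_eq_left h, max_eq_right h] at hz
      exact hz
  by_cases hkj : k = j
  · subst hkj
    rcases le_total ℓ k with h | h
    · have hz := hzQ ((ℓ : ℕ) : ZMod n)
      rw [hκeq ℓ, max_eq_left h, min_eq_right h] at hz
      exact hz
    · have hz := hzQ' ((ℓ : ℕ) : ZMod n)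
      rw [hκeq ℓ, min_eq_left h, max_eq_right h] at hz
      exact hz
  by_cases hli : ℓ = i
  · subst hli
    rcases le_total k ℓ with h | h
    · have hz := hzP' ((k : ℕ) : ZMod n)
      rw [hκeq k, min_eq_right h, max_eq_left h] at hz
      exact hz
    · have hz := hzP ((k : ℕ) : ZMod n)
      rw [hκeq k, max_eq_right h, min_eq_left h] at hz
      exact hz
  by_cases hlj : ℓ = j
  · subst hlj
    rcases le_total k ℓ with h | h
    · have hz := hzQ' ((k : ℕ) : ZMod n)
      rw [hκeq k, min_eq_right h, max_eq_left h] at hz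
      exact hz
    · have hz := hzQ ((k : ℕ) : ZMod n)
      rw [hκeq k, max_eq_right h, min_eq_left h] at hz
      exact hz
  · exact h0 k ℓ hki hkj hli hlj

end CG4Proof


/-- Theorem 8 (correction part): for prime `n ≥ 5` the code `C_{G_4}` is a binary
double-node-erasure-correcting code: any two labelings of `C_{G_4}` agreeing on all
ordered pairs avoiding two failed nodes `i, j` are equal. -/
theorem CG4_double_node_erasure_correcting (n : ℕ) (hn : 5 ≤ n) (hp : Nat.Prime n)
    (i j : Fin n) (hij : i ≠ j)
    (L1 L2 : Fin n → Fin n → ZMod 2) (h1 : L1 ∈ CG4 n hn) (h2 : L2 ∈ CG4 n hn)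
    (hagree : ∀ k ℓ : Fin n, k ≠ i → k ≠ j → ℓ ≠ i → ℓ ≠ j → L1 k ℓ = L2 k ℓ) :
    L1 = L2 := by
  obtain ⟨a1, b1, c1, d1⟩ := h1
  obtain ⟨a2, b2, c2, d2⟩ := h2
  have key := CG4Proof.key n hn hp i j hij (fun k ℓ => L1 k ℓ - L2 k ℓ)
    (by
      intro h hh
      rw [Finset.sum_sub_distrib, a1 h hh, a2 h hh, sub_zero])
    (by
      intro m hm
      rw [Finset.sum_sub_distrib]
      linear_combination b1 m hm - b2 m hm)
    (by
      intro h hh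
      rw [Finset.sum_sub_distrib, c1 h hh, c2 h hh, sub_zero])
    (by
      intro m hm
      rw [Finset.sum_sub_distrib]
      linear_combination d1 m hm - d2 m hm)
    (by
      intro k ℓ hk1 hk2 hl1 hl2
      show L1 k ℓ - L2 k ℓ = 0
      rw [hagree k ℓ hk1 hk2 hl1 hl2, sub_self])
  funext k ℓ
  exact sub_eq_zero.mp (key k ℓ)
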